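/- arXiv:2309.16504 — 5 statements merged into one kernel-verified Lean document; each statement's English description precedes it below -/
import Mathlib

section
/- Let d ≥ 1 and j ≥ 2 be integers and let σ be a real number with σ < -d/2. Then there exists a constant C > 0 such that for every function c : ℤ^d → [0,∞), the (possibly infinite) sum ∑_{n ∈ ℤ^d} ⟨n⟩^{2σ} ∑_{(n_1,…,n_j) ∈ (ℤ^d)^j, n_1+⋯+n_j = n} c_{n_1}^2 ⋯ c_{n_j}^2 is at most C · (∑_{n ∈ ℤ^d} c_n^{2j/(j-1)})^{(j-1)}. -/
open scoped ENNReal NNReal BigOperators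
open scoped Classical

/-- The Japanese bracket `⟨n⟩ = (1 + |n|²)^{1/2}` of a lattice point `n ∈ ℤ^d`,
where `|n|` is the Euclidean norm. -/
noncomputable def jpn {d : ℕ} (n : Fin d → ℤ) : ℝ :=
  Real.sqrt (1 + ∑ i, ((n i : ℝ)) ^ 2)

/-- Sum over all tuples of a product factorizes. -/
lemma tsum_prod_fin {G : Type*} (f : G → ℝ≥0∞) :
    ∀ n : ℕ, ∑' u : Fin n → G, ∏ i, f (u i) = (∑' m, f m) ^ n
  | 0 => by
    rw [pow_zero, tsum_eq_single (fun i => (i.elim0 : G))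
      (fun b hb => absurd (funext fun i => i.elim0) hb)]
    simp
  | (n + 1) => by
    have e : G × (Fin n → G) ≃ (Fin (n + 1) → G) := Fin.consEquiv (fun _ => G)
    have h1 : ∑' p : G × (Fin n → G), ∏ i, f ((Fin.cons p.1 p.2 : Fin (n+1) → G) i)
        = ∑' u : Fin (n + 1) → G, ∏ i, f (u i) :=
      (Fin.consEquiv (fun _ => G)).tsum_eq (fun u => ∏ i, f (u i))
    rw [← h1]
    have h2 : ∀ p : G × (Fin n → G),
        (∏ i, f ((Fin.cons p.1 p.2 : Fin (n+1) → G) i)) = f p.1 * ∏ i, f (p.2 i) := by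
      intro p
      rw [Fin.prod_univ_succ]
      simp
    calc ∑' p : G × (Fin n → G), ∏ i, f ((Fin.cons p.1 p.2 : Fin (n+1) → G) i)
        = ∑' p : G × (Fin n → G), f p.1 * ∏ i, f (p.2 i) := tsum_congr h2
      _ = ∑' x : G, ∑' u : Fin n → G, f x * ∏ i, f (u i) := by
          rw [ENNReal.tsum_prod']
      _ = ∑' x : G, f x * ∑' u : Fin n → G, ∏ i, f (u i) := by
          refine tsum_congr fun x => ?_
          exact ENNReal.tsum_mul_left
      _ = (∑' m, f m) * (∑' m, f m) ^ n := by
          rw [ENNReal.tsum_mul_right, tsum_prod_fin f n]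
      _ = (∑' m, f m) ^ (n + 1) := by ring

lemma tsum_prod_fintype {ι G : Type*} [Fintype ι] (f : G → ℝ≥0∞) :
    ∑' u : ι → G, ∏ i, f (u i) = (∑' m, f m) ^ (Fintype.card ι) := by
  classical
  set n := Fintype.card ι
  let e : ι ≃ Fin n := Fintype.equivFin ι
  let E : (ι → G) ≃ (Fin n → G) := Equiv.arrowCongr e (Equiv.refl G)
  have h1 : ∑' u : ι → G, (∏ i : Fin n, f ((E u) i)) = ∑' w : Fin n → G, ∏ i, f (w i) :=
    E.tsum_eq (fun w => ∏ i, f (w i))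
  have h2 : ∀ u : ι → G, (∏ i : Fin n, f ((E u) i)) = ∏ i : ι, f (u i) := by
    intro u
    exact e.symm.prod_comp (fun k => f (u k))
  rw [← tsum_prod_fin f n, ← h1]
  exact tsum_congr fun u => (h2 u).symm

/-- crude AM-GM in `ℝ≥0∞`: a product is at most the sum of the `card`-th powers. -/
lemma prod_le_sum_pow {ι : Type*} (s : Finset ι) (hs : s.Nonempty) (x : ι → ℝ≥0∞) :
    ∏ l ∈ s, x l ≤ ∑ l ∈ s, x l ^ s.card := by
  obtain ⟨m, hm, hmax⟩ := s.exists_max_image x hs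
  calc ∏ l ∈ s, x l ≤ ∏ _l ∈ s, x m := Finset.prod_le_prod' (fun i hi => hmax i hi)
    _ = x m ^ s.card := Finset.prod_const _
    _ ≤ ∑ l ∈ s, x l ^ s.card :=
        Finset.single_le_sum (f := fun l => x l ^ s.card) (fun i _ => zero_le) hm

lemma summable_one_dim {t : ℝ} (ht : t < -(1/2 : ℝ)) :
    Summable (fun m : ℤ => (1 + (m : ℝ) ^ 2) ^ t) := by
  have hnat : Summable (fun n : ℕ => (1 + (n : ℝ) ^ 2) ^ t) := by
    rw [← summable_nat_add_iff 1]
    have hs : Summable (fun n : ℕ => ((n + 1 : ℕ) : ℝ) ^ (2 * t)) :=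
      (summable_nat_add_iff 1).mpr (Real.summable_nat_rpow.mpr (by linarith))
    refine hs.of_nonneg_of_le (fun n => Real.rpow_nonneg (by positivity) _) (fun n => ?_)
    have hbase : ((n + 1 : ℕ) : ℝ) ^ (2 * t) = (((n + 1 : ℕ) : ℝ) ^ 2) ^ t := by
      rw [← Real.rpow_natCast ((n + 1 : ℕ) : ℝ) 2, ← Real.rpow_mul (by positivity)]
      norm_num
    rw [hbase]
    refine Real.rpow_le_rpow_of_nonpos (by positivity) ?_ (by linarith)
    nlinarith [sq_nonneg (((n + 1 : ℕ) : ℝ))]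
  refine Summable.of_nat_of_neg ?_ ?_
  · exact hnat
  · refine (summable_congr fun n => ?_).mpr hnat
    push_cast
    ring_nf

lemma tsum_weight_ne_top (d : ℕ) (hd : 1 ≤ d) (σ : ℝ) (hσ : σ < -(d : ℝ) / 2) :
    ∑' n : Fin d → ℤ, ENNReal.ofReal ((1 + ∑ i, ((n i : ℝ)) ^ 2) ^ σ) ≠ ⊤ := by
  have hd0 : (0 : ℝ) < d := by exact_mod_cast hd
  set t : ℝ := σ / d with hts
  have ht : t < -(1/2 : ℝ) := by
    rw [hts, div_lt_iff₀ hd0]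
    nlinarith
  have hσ0 : σ ≤ 0 := by nlinarith
  -- pointwise bound
  have hpt : ∀ n : Fin d → ℤ, ENNReal.ofReal ((1 + ∑ i, ((n i : ℝ)) ^ 2) ^ σ)
      ≤ ∏ i, ENNReal.ofReal ((1 + ((n i : ℝ)) ^ 2) ^ t) := by
    intro n
    set q : ℝ := ∑ i, ((n i : ℝ)) ^ 2 with hq
    have hq0 : 0 ≤ q := Finset.sum_nonneg fun i _ => sq_nonneg _
    have hP : ∏ i, (1 + ((n i : ℝ)) ^ 2) ≤ (1 + q) ^ d := by
      have : ∏ i, (1 + ((n i : ℝ)) ^ 2) ≤ ∏ _i : Fin d, (1 + q) := by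
        refine Finset.prod_le_prod (fun i _ => by positivity) (fun i _ => ?_)
        have : ((n i : ℝ)) ^ 2 ≤ q := by
          rw [hq]
          exact Finset.single_le_sum (f := fun k => ((n k : ℝ)) ^ 2)
            (fun k _ => sq_nonneg _) (Finset.mem_univ i)
        linarith
      have h2 : ∏ _i : Fin d, (1 + q) = (1 + q) ^ d := by
        rw [Finset.prod_const, Finset.card_univ, Fintype.card_fin]
      exact this.trans_eq h2
    have hPpos : (0 : ℝ) < ∏ i, (1 + ((n i : ℝ)) ^ 2) :=
      Finset.prod_pos fun i _ => by positivity
    have hstep : (1 + q) ^ σ ≤ (∏ i, (1 + ((n i : ℝ)) ^ 2)) ^ t := by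
      have h1 : (1 + q) ^ σ = ((1 + q) ^ (d : ℕ)) ^ t := by
        rw [← Real.rpow_natCast (1 + q) d, ← Real.rpow_mul (by linarith)]
        congr 1
        rw [hts]
        field_simp
      rw [h1]
      exact Real.rpow_le_rpow_of_nonpos hPpos hP (by linarith)
    have hprodpow : (∏ i, (1 + ((n i : ℝ)) ^ 2)) ^ t = ∏ i, (1 + ((n i : ℝ)) ^ 2) ^ t :=
      (Real.finset_prod_rpow Finset.univ (fun i => (1 + ((n i : ℝ)) ^ 2))
        (fun i _ => by positivity) t).symm
    calc ENNReal.ofReal ((1 + q) ^ σ)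
        ≤ ENNReal.ofReal (∏ i, (1 + ((n i : ℝ)) ^ 2) ^ t) := by
          exact ENNReal.ofReal_le_ofReal (by rw [← hprodpow]; exact hstep)
      _ = ∏ i, ENNReal.ofReal ((1 + ((n i : ℝ)) ^ 2) ^ t) :=
          ENNReal.ofReal_prod_of_nonneg (fun i _ => Real.rpow_nonneg (by positivity) _)
  have hsum1 : Summable (fun m : ℤ => (1 + (m : ℝ) ^ 2) ^ t) := summable_one_dim ht
  have h1top : (∑' m : ℤ, ENNReal.ofReal ((1 + (m : ℝ) ^ 2) ^ t)) ≠ ⊤ := by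
    rw [← ENNReal.ofReal_tsum_of_nonneg (fun m => Real.rpow_nonneg (by positivity) _) hsum1]
    exact ENNReal.ofReal_ne_top
  have hmain : ∑' n : Fin d → ℤ, ENNReal.ofReal ((1 + ∑ i, ((n i : ℝ)) ^ 2) ^ σ)
      ≤ (∑' m : ℤ, ENNReal.ofReal ((1 + (m : ℝ) ^ 2) ^ t)) ^ d := by
    calc ∑' n : Fin d → ℤ, ENNReal.ofReal ((1 + ∑ i, ((n i : ℝ)) ^ 2) ^ σ)
        ≤ ∑' n : Fin d → ℤ, ∏ i, ENNReal.ofReal ((1 + ((n i : ℝ)) ^ 2) ^ t) :=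
          Summable.tsum_le_tsum hpt ENNReal.summable ENNReal.summable
      _ = (∑' m : ℤ, ENNReal.ofReal ((1 + (m : ℝ) ^ 2) ^ t)) ^ (Fintype.card (Fin d)) :=
          tsum_prod_fintype (fun m : ℤ => ENNReal.ofReal ((1 + (m : ℝ) ^ 2) ^ t))
      _ = (∑' m : ℤ, ENNReal.ofReal ((1 + (m : ℝ) ^ 2) ^ t)) ^ d := by rw [Fintype.card_fin]
  exact ne_top_of_le_ne_top (ENNReal.pow_ne_top h1top) hmain

/-- for `σ < -d/2`, the weighted `j`-fold autocorrelation sum is bounded by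
`C ‖c‖_{ℓ^{2j/(j-1)}}^{2j} = C (∑ c_n^{2j/(j-1)})^{j-1}`. -/
theorem stmt1 (d j : ℕ) (hd : 1 ≤ d) (hj : 2 ≤ j) (σ : ℝ)
    (hσ : σ < -(d : ℝ) / 2) :
    ∃ C : ℝ, 0 < C ∧ ∀ c : (Fin d → ℤ) → ℝ≥0,
      (∑' n : Fin d → ℤ, ENNReal.ofReal (jpn n ^ (2 * σ)) *
        ∑' v : Fin j → (Fin d → ℤ),
          (if (∑ l, v l) = n then ∏ l, ((c (v l) : ℝ≥0∞)) ^ 2 else 0))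
      ≤ ENNReal.ofReal C *
          (∑' n : Fin d → ℤ,
            ((c n : ℝ≥0∞)) ^ (2 * (j : ℝ) / ((j : ℝ) - 1))) ^ (j - 1) := by
  classical
  have hj1 : (1 : ℝ) ≤ (j : ℝ) - 1 := by
    have : (2 : ℝ) ≤ (j : ℝ) := by exact_mod_cast hj
    linarith
  have hjne : ((j : ℝ) - 1) ≠ 0 := by linarith
  have hcast : ((j - 1 : ℕ) : ℝ) = (j : ℝ) - 1 := by
    have h2 : 1 ≤ j := le_trans one_le_two hj
    rw [Nat.cast_sub h2, Nat.cast_one]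
  set p : ℝ := 2 * (j : ℝ) / ((j : ℝ) - 1) with hp
  -- the weight
  have hjpn : ∀ n : Fin d → ℤ, jpn n ^ (2 * σ) = (1 + ∑ i, ((n i : ℝ)) ^ 2) ^ σ := by
    intro n
    have hq0 : (0 : ℝ) ≤ 1 + ∑ i, ((n i : ℝ)) ^ 2 := by positivity
    rw [jpn, Real.sqrt_eq_rpow, ← Real.rpow_mul hq0]
    congr 1
    ring
  set W : ℝ≥0∞ := ∑' n : Fin d → ℤ, ENNReal.ofReal (jpn n ^ (2 * σ)) with hWdef
  have hWtop : W ≠ ⊤ := by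
    rw [hWdef]
    have : (fun n : Fin d → ℤ => ENNReal.ofReal (jpn n ^ (2 * σ)))
        = fun n : Fin d → ℤ => ENNReal.ofReal ((1 + ∑ i, ((n i : ℝ)) ^ 2) ^ σ) := by
      funext n; rw [hjpn n]
    rw [this]
    exact tsum_weight_ne_top d hd σ hσ
  refine ⟨(j : ℝ) * W.toReal + 1, by positivity, fun c => ?_⟩
  set A : ℝ≥0∞ := ∑' n : Fin d → ℤ, ((c n : ℝ≥0∞)) ^ p with hA
  -- key per-n bound
  have key : ∀ n : Fin d → ℤ,
      (∑' v : Fin j → (Fin d → ℤ),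
          (if (∑ l, v l) = n then ∏ l, ((c (v l) : ℝ≥0∞)) ^ 2 else 0))
        ≤ (j : ℝ≥0∞) * A ^ (j - 1) := by
    intro n
    -- Step 1: pointwise AM-GM
    have step1 : ∀ v : Fin j → (Fin d → ℤ),
        (∏ l, ((c (v l) : ℝ≥0∞)) ^ 2)
          ≤ ∑ l : Fin j, ∏ k ∈ Finset.univ.erase l, ((c (v k) : ℝ≥0∞)) ^ p := by
      intro v
      set y : Fin j → ℝ≥0∞ := fun k => ((c (v k) : ℝ≥0∞)) ^ ((2 : ℝ) / ((j : ℝ) - 1)) with hy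
      set x : Fin j → ℝ≥0∞ := fun l => ∏ k ∈ Finset.univ.erase l, y k with hx
      have hprodx : ∏ l, x l = ∏ l, ((c (v l) : ℝ≥0∞)) ^ 2 := by
        rw [hx]
        have hswap : (∏ l : Fin j, ∏ k ∈ Finset.univ.erase l, y k)
            = ∏ k : Fin j, ∏ l ∈ Finset.univ.erase k, y k := by
          refine Finset.prod_comm' ?_
          intro l k
          simp [Finset.mem_erase, ne_comm, and_comm]
        rw [hswap]
        refine Finset.prod_congr rfl fun k _ => ?_
        rw [Finset.prod_const, Finset.card_erase_of_mem (Finset.mem_univ _),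
          Finset.card_univ, Fintype.card_fin]
        rw [hy, ← ENNReal.rpow_natCast (((c (v k) : ℝ≥0∞)) ^ ((2:ℝ) / ((j:ℝ) - 1))) (j - 1),
          ← ENNReal.rpow_mul]
        rw [hcast]
        rw [div_mul_cancel₀ _ hjne]
        exact ENNReal.rpow_natCast _ 2
      have hxpow : ∀ l, x l ^ j = ∏ k ∈ Finset.univ.erase l, ((c (v k) : ℝ≥0∞)) ^ p := by
        intro l
        rw [hx, ← Finset.prod_pow]
        refine Finset.prod_congr rfl fun k _ => ?_
        rw [hy, ← ENNReal.rpow_natCast (((c (v k) : ℝ≥0∞)) ^ ((2:ℝ) / ((j:ℝ) - 1))) j,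
          ← ENNReal.rpow_mul]
        congr 1
        rw [hp]
        ring
      have hne : (Finset.univ : Finset (Fin j)).Nonempty := by
        have hpos : 0 < j := lt_of_lt_of_le (by norm_num) hj
        have : Nonempty (Fin j) := Fin.pos_iff_nonempty.mp hpos
        exact Finset.univ_nonempty
      calc ∏ l, ((c (v l) : ℝ≥0∞)) ^ 2 = ∏ l, x l := hprodx.symm
        _ ≤ ∑ l, x l ^ (Finset.univ : Finset (Fin j)).card :=
            prod_le_sum_pow _ hne x
        _ = ∑ l : Fin j, ∏ k ∈ Finset.univ.erase l, ((c (v k) : ℝ≥0∞)) ^ p := by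
            refine Finset.sum_congr rfl fun l _ => ?_
            rw [Finset.card_univ, Fintype.card_fin, hxpow l]
    -- Step 2: for each l, the constrained sum is at most A ^ (j-1)
    have step2 : ∀ l : Fin j,
        (∑' v : Fin j → (Fin d → ℤ),
            (if (∑ k, v k) = n then ∏ k ∈ Finset.univ.erase l, ((c (v k) : ℝ≥0∞)) ^ p else 0))
          ≤ A ^ (j - 1) := by
      intro l
      set S : Set (Fin j → (Fin d → ℤ)) := {v | (∑ k, v k) = n} with hS
      have hind : ∀ v : Fin j → (Fin d → ℤ),
          (if (∑ k, v k) = n then ∏ k ∈ Finset.univ.erase l, ((c (v k) : ℝ≥0∞)) ^ p else 0)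
            = S.indicator (fun v => ∏ k ∈ Finset.univ.erase l, ((c (v k) : ℝ≥0∞)) ^ p) v := by
        intro v
        by_cases h : (∑ k, v k) = n
        · have hv : v ∈ S := h
          rw [if_pos h, Set.indicator_of_mem hv]
        · have hv : v ∉ S := h
          rw [if_neg h, Set.indicator_of_notMem hv]
      rw [tsum_congr hind, ← tsum_subtype S]
      -- inject into unconstrained tuples indexed by k ≠ l
      set i : S → ({k : Fin j // k ≠ l} → (Fin d → ℤ)) := fun z k => z.1 k.1 with hi
      have hval : ∀ z : S, z.1 l = n - ∑ k ∈ Finset.univ.erase l, z.1 k := by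
        intro z
        have hz : z.1 l + ∑ k ∈ Finset.univ.erase l, z.1 k = n := by
          rw [Finset.add_sum_erase _ _ (Finset.mem_univ l)]
          exact z.2
        exact eq_sub_of_add_eq hz
      have hinj : Function.Injective i := by
        intro z w h
        apply Subtype.ext
        funext k
        by_cases hk : k = l
        · rw [hk, hval z, hval w]
          congr 1
          refine Finset.sum_congr rfl fun k' hk' => ?_
          have hk'l : k' ≠ l := (Finset.mem_erase.mp hk').1
          exact congrFun h ⟨k', hk'l⟩
        · exact congrFun h ⟨k, hk⟩
      have hfac : ∀ z : S,
          (∏ k ∈ Finset.univ.erase l, ((c (z.1 k) : ℝ≥0∞)) ^ p)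
            = ∏ k : {k : Fin j // k ≠ l}, ((c ((i z) k) : ℝ≥0∞)) ^ p := by
        intro z
        exact Finset.prod_subtype (Finset.univ.erase l)
          (by intro k; simp [Finset.mem_erase]) (fun k => ((c (z.1 k) : ℝ≥0∞)) ^ p)
      have hcard : Fintype.card {k : Fin j // k ≠ l} = j - 1 := by
        have h1 : Fintype.card {k : Fin j // ¬ (k = l)} =
            Fintype.card (Fin j) - Fintype.card {k : Fin j // k = l} :=
          Fintype.card_subtype_compl _
        simpa [Fintype.card_fin, Fintype.card_subtype_eq] using h1
      calc (∑' z : S, ∏ k ∈ Finset.univ.erase l, ((c (z.1 k) : ℝ≥0∞)) ^ p)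
          = ∑' z : S, ∏ k : {k : Fin j // k ≠ l}, ((c ((i z) k) : ℝ≥0∞)) ^ p :=
            tsum_congr hfac
        _ ≤ ∑' u : {k : Fin j // k ≠ l} → (Fin d → ℤ),
              ∏ k : {k : Fin j // k ≠ l}, ((c (u k) : ℝ≥0∞)) ^ p :=
            ENNReal.tsum_comp_le_tsum_of_injective hinj _
        _ = (∑' m : Fin d → ℤ, ((c m : ℝ≥0∞)) ^ p) ^ (Fintype.card {k : Fin j // k ≠ l}) :=
            tsum_prod_fintype (fun m : Fin d → ℤ => ((c m : ℝ≥0∞)) ^ p)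
        _ = A ^ (j - 1) := by rw [hcard, hA]
    -- combine
    calc (∑' v : Fin j → (Fin d → ℤ),
            (if (∑ l, v l) = n then ∏ l, ((c (v l) : ℝ≥0∞)) ^ 2 else 0))
        ≤ ∑' v : Fin j → (Fin d → ℤ),
            ∑ l : Fin j, (if (∑ k, v k) = n then
              ∏ k ∈ Finset.univ.erase l, ((c (v k) : ℝ≥0∞)) ^ p else 0) := by
          refine Summable.tsum_le_tsum (fun v => ?_) ENNReal.summable ENNReal.summable
          by_cases h : (∑ l, v l) = n
          · simp only [if_pos h]
            exact step1 v
          · simp [if_neg h]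
      _ = ∑ l : Fin j, ∑' v : Fin j → (Fin d → ℤ),
            (if (∑ k, v k) = n then
              ∏ k ∈ Finset.univ.erase l, ((c (v k) : ℝ≥0∞)) ^ p else 0) :=
          Summable.tsum_finsetSum (fun _ _ => ENNReal.summable)
      _ ≤ ∑ _l : Fin j, A ^ (j - 1) :=
          Finset.sum_le_sum fun l _ => step2 l
      _ = (j : ℝ≥0∞) * A ^ (j - 1) := by
          rw [Finset.sum_const, Finset.card_univ, Fintype.card_fin, nsmul_eq_mul]
  -- sum over n
  calc (∑' n : Fin d → ℤ, ENNReal.ofReal (jpn n ^ (2 * σ)) *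
        ∑' v : Fin j → (Fin d → ℤ),
          (if (∑ l, v l) = n then ∏ l, ((c (v l) : ℝ≥0∞)) ^ 2 else 0))
      ≤ ∑' n : Fin d → ℤ, ENNReal.ofReal (jpn n ^ (2 * σ)) * ((j : ℝ≥0∞) * A ^ (j - 1)) :=
        Summable.tsum_le_tsum (fun n => mul_le_mul_right (key n) _) ENNReal.summable ENNReal.summable
    _ = W * ((j : ℝ≥0∞) * A ^ (j - 1)) := ENNReal.tsum_mul_right
    _ = (W * (j : ℝ≥0∞)) * A ^ (j - 1) := by ring
    _ ≤ ENNReal.ofReal ((j : ℝ) * W.toReal + 1) * A ^ (j - 1) := by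
        refine mul_le_mul_left ?_ _
        have h1 : W * (j : ℝ≥0∞) = ENNReal.ofReal (W.toReal * (j : ℝ)) := by
          rw [ENNReal.ofReal_mul ENNReal.toReal_nonneg, ENNReal.ofReal_toReal hWtop]
          congr 1
          simp [ENNReal.ofReal_natCast]
        rw [h1]
        refine ENNReal.ofReal_le_ofReal ?_
        have := ENNReal.toReal_nonneg (a := W)
        linarith [mul_comm W.toReal (j : ℝ)]
end

section
/- Fix integers d ≥ 1 and j ≥ 2, and let a : ℤ^d → [0,∞) be the counterexample sequence: a_n = ã_{n⁽¹⁾}⋯ã_{n⁽ᵈ⁾}, where ã_k = m^{-(j-1)/(2j)} if |k| = 2^m for some integer m ≥ 1 and ã_k = 0 otherwise. Then for every real s < 0, the sum ∑_{n ∈ ℤ^d} ⟨n⟩^{2s} a_n^2 is finite. -/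
open scoped ENNReal NNReal BigOperators
open scoped Classical

/-- The one-dimensional building block of the counterexample sequence:
`ã_k = m^{-(j-1)/(2j)}` if `|k| = 2^m` for some integer `m ≥ 1`, and `ã_k = 0` otherwise. -/
noncomputable def atil (j : ℕ) (k : ℤ) : ℝ :=
  if ∃ m : ℕ, 1 ≤ m ∧ k.natAbs = 2 ^ m then
    (Nat.log 2 k.natAbs : ℝ) ^ (-(((j : ℝ) - 1) / (2 * (j : ℝ))))
  else 0

/-- The counterexample sequence `a_n = ã_{n⁽¹⁾} ⋯ ã_{n⁽ᵈ⁾}` on `ℤ^d`. -/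
noncomputable def aseq (j d : ℕ) (n : Fin d → ℤ) : ℝ :=
  ∏ i, atil j (n i)

lemma atil_nonneg (j : ℕ) (k : ℤ) : 0 ≤ atil j k := by
  unfold atil
  split
  · positivity
  · exact le_refl 0

lemma atil_le_one (j : ℕ) (hj : 2 ≤ j) (k : ℤ) : atil j k ≤ 1 := by
  unfold atil
  split
  · rename_i h
    obtain ⟨m, hm1, hm⟩ := h
    apply Real.rpow_le_one_of_one_le_of_nonpos
    · rw [hm, Nat.log_pow (by norm_num)]
      exact_mod_cast hm1
    · have hj1 : (1:ℝ) ≤ (j:ℝ) := by exact_mod_cast Nat.one_le_of_lt hj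
      have : 0 ≤ ((j:ℝ) - 1) / (2 * (j:ℝ)) := div_nonneg (by linarith) (by linarith)
      linarith
  · norm_num

lemma tsum_pi_prod (g : ℤ → ℝ≥0∞) (d : ℕ) :
    ∑' n : Fin d → ℤ, ∏ i, g (n i) = (∑' k, g k) ^ d := by
  induction d with
  | zero =>
    rw [pow_zero, tsum_eq_single (fun i => i.elim0)
      (fun b hb => (hb (Subsingleton.elim _ _)).elim)]
    simp
  | succ d ih =>
    rw [← (Fin.consEquiv (fun _ : Fin (d + 1) => ℤ)).tsum_eq, pow_succ]
    have h1 : ∀ p : ℤ × (Fin d → ℤ),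
        (∏ i, g (((Fin.consEquiv (fun _ : Fin (d + 1) => ℤ)) p) i))
          = g p.1 * ∏ i, g (p.2 i) := by
      intro p
      simp [Fin.consEquiv, Fin.prod_univ_succ]
    rw [tsum_congr h1]
    calc ∑' p : ℤ × (Fin d → ℤ), g p.1 * ∏ i, g (p.2 i)
        = ∑' a : ℤ, ∑' b : Fin d → ℤ, g a * ∏ i, g (b i) :=
          ENNReal.tsum_prod (f := fun (a : ℤ) (b : Fin d → ℤ) => g a * ∏ i, g (b i))
      _ = ∑' a : ℤ, g a * ∑' b : Fin d → ℤ, ∏ i, g (b i) := by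
          simp [ENNReal.tsum_mul_left]
      _ = (∑' k, g k) ^ d * ∑' k, g k := by
          rw [ENNReal.tsum_mul_right, ih, mul_comm]

/-- the counterexample initial data belongs to `H^s(𝕋^d)` for every `s < 0`:
`∑_{n ∈ ℤ^d} ⟨n⟩^{2s} a_n^2 < ∞`. -/
theorem stmt4 (d j : ℕ) (hd : 1 ≤ d) (hj : 2 ≤ j) (s : ℝ) (hs : s < 0) :
    (∑' n : Fin d → ℤ,
      ENNReal.ofReal (jpn n ^ (2 * s) * (aseq j d n) ^ 2)) < ⊤ := by
  have hd0 : (0:ℝ) < (d:ℝ) := by exact_mod_cast hd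
  set t : ℝ := s / (d:ℝ) with ht
  have htneg : t < 0 := div_neg_of_neg_of_pos hs hd0
  set g : ℤ → ℝ≥0∞ := fun k =>
    ENNReal.ofReal ((1 + (k:ℝ) ^ 2) ^ t * atil j k ^ 2) with hg
  -- pointwise bound
  have key : ∀ n : Fin d → ℤ,
      ENNReal.ofReal (jpn n ^ (2 * s) * (aseq j d n) ^ 2) ≤ ∏ i, g (n i) := by
    intro n
    have hfac : ∀ i ∈ Finset.univ, 0 ≤ (1 + ((n i : ℤ) : ℝ) ^ 2) ^ t * atil j (n i) ^ 2 := by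
      intro i _; positivity
    rw [hg]
    rw [← ENNReal.ofReal_prod_of_nonneg hfac]
    apply ENNReal.ofReal_le_ofReal
    rw [Finset.prod_mul_distrib]
    have haseq : (aseq j d n) ^ 2 = ∏ i, atil j (n i) ^ 2 := by
      rw [aseq, ← Finset.prod_pow]
    rw [haseq]
    apply mul_le_mul_of_nonneg_right _ (Finset.prod_nonneg fun i _ => by positivity)
    -- jpn n ^ (2s) ≤ ∏ (1 + n_i²)^t
    set X : ℝ := 1 + ∑ i, ((n i : ℝ)) ^ 2 with hX
    have hX1 : 1 ≤ X := by
      have : (0:ℝ) ≤ ∑ i, ((n i : ℝ)) ^ 2 := Finset.sum_nonneg fun i _ => by positivity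
      simp [hX]; linarith
    have hX0 : (0:ℝ) < X := by linarith
    have hjpn : jpn n ^ (2 * s) = X ^ s := by
      rw [jpn, Real.sqrt_eq_rpow, ← Real.rpow_mul hX0.le]
      congr 1
      ring
    rw [hjpn]
    have hprodpos : (0:ℝ) < ∏ i, (1 + ((n i : ℝ)) ^ 2) :=
      Finset.prod_pos fun i _ => by positivity
    have hle : ∏ i, (1 + ((n i : ℝ)) ^ 2) ≤ X ^ d := by
      have h0 : ∏ i, (1 + ((n i : ℝ)) ^ 2) ≤ ∏ _i : Fin d, X := by
        apply Finset.prod_le_prod (fun i _ => by positivity)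
        intro i _
        have h1 : ((n i : ℝ)) ^ 2 ≤ ∑ i, ((n i : ℝ)) ^ 2 :=
          Finset.single_le_sum (f := fun i => ((n i : ℝ)) ^ 2)
            (fun i _ => sq_nonneg _) (Finset.mem_univ i)
        rw [hX]; linarith
      simpa using h0
    have h2 : X ^ s ≤ (∏ i, (1 + ((n i : ℝ)) ^ 2)) ^ t := by
      have h3 := Real.rpow_le_rpow_of_nonpos hprodpos hle htneg.le
      have h4 : ((X ^ d : ℝ)) ^ t = X ^ s := by
        rw [← Real.rpow_natCast X d, ← Real.rpow_mul hX0.le]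
        congr 1
        field_simp [ht]
        rw [ht]; field_simp [hd0.ne']
      rw [h4] at h3
      exact h3
    calc X ^ s ≤ (∏ i, (1 + ((n i : ℝ)) ^ 2)) ^ t := h2
      _ = ∏ i, (1 + ((n i : ℝ)) ^ 2) ^ t :=
        (Real.finset_prod_rpow _ _ (fun i _ => by positivity) t).symm
  -- one-dimensional sum is finite
  have hG : ∑' k : ℤ, g k < ⊤ := by
    set f : ℕ × Bool → ℤ := fun p => (if p.2 then (1:ℤ) else -1) * 2 ^ (p.1 + 1) with hf
    have hnat : ∀ (a : ℕ) (c : Bool), (f (a, c)).natAbs = 2 ^ (a + 1) := by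
      intro a c
      cases c <;> simp [hf, Int.natAbs_mul, Int.natAbs_pow]
    have hinj : Function.Injective f := by
      rintro ⟨m, b⟩ ⟨m', b'⟩ h
      have hm : m = m' := by
        have h2 := congrArg Int.natAbs h
        rw [hnat, hnat] at h2
        exact Nat.succ_injective (Nat.pow_right_injective (le_refl 2) h2)
      subst hm
      have hpos : (0:ℤ) < 2 ^ (m + 1) := by positivity
      have hb : b = b' := by
        cases b <;> cases b' <;> simp_all [hf] <;>
          · have := pow_pos (by norm_num : (0:ℤ) < 2) (m + 1); linarith
      rw [hb]
    have hsupp : Function.support g ⊆ Set.range f := by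
      intro k hk
      have hat : atil j k ≠ 0 := by
        intro h0
        apply hk
        simp [hg, h0]
      have hcond : ∃ m : ℕ, 1 ≤ m ∧ k.natAbs = 2 ^ m := by
        by_contra hc
        exact hat (by rw [atil, if_neg hc])
      obtain ⟨m, hm1, hm⟩ := hcond
      rcases Int.natAbs_eq k with hk' | hk'
      · refine ⟨(m - 1, true), ?_⟩
        have hmm : m - 1 + 1 = m := by omega
        show (if true then (1:ℤ) else -1) * 2 ^ (m - 1 + 1) = k
        rw [hmm, hk', hm]
        push_cast
        norm_num
      · refine ⟨(m - 1, false), ?_⟩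
        have hmm : m - 1 + 1 = m := by omega
        show (if false then (1:ℤ) else -1) * 2 ^ (m - 1 + 1) = k
        rw [hmm, hk', hm]
        push_cast
        norm_num
    have heq : ∑' k : ℤ, g k = ∑' p : ℕ × Bool, g (f p) := by
      rw [← tsum_subtype_eq_of_support_subset hsupp,
        ← (Equiv.ofInjective f hinj).tsum_eq (fun x : Set.range f => g x)]
      rfl
    set q : ℝ≥0∞ := ENNReal.ofReal ((4:ℝ) ^ t) with hq
    have hq1 : q < 1 := by
      rw [hq, ← ENNReal.ofReal_one]
      exact ENNReal.ofReal_lt_ofReal_iff (by norm_num) |>.mpr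
        (Real.rpow_lt_one_of_one_lt_of_neg (by norm_num) htneg)
    have hbound : ∀ p : ℕ × Bool, g (f p) ≤ q ^ (p.1 + 1) := by
      rintro ⟨m, b⟩
      have habs : ((f (m, b) : ℤ) : ℝ) ^ 2 = 4 ^ (m + 1) := by
        have h4 : (4:ℝ) ^ (m+1) = ((2:ℝ) ^ (m+1)) ^ 2 := by
          rw [← pow_mul, show (4:ℝ) = 2^2 by norm_num, ← pow_mul, mul_comm]
        cases b <;> simp [hf, h4]
      have h4pos : (0:ℝ) < 4 ^ (m + 1) := by positivity
      have hstep : (1 + ((f (m, b) : ℤ) : ℝ) ^ 2) ^ t * atil j (f (m, b)) ^ 2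
          ≤ ((4:ℝ) ^ t) ^ (m + 1) := by
        have h1 : (1 + ((f (m, b) : ℤ) : ℝ) ^ 2) ^ t ≤ ((4:ℝ) ^ (m+1)) ^ t := by
          rw [habs]
          exact Real.rpow_le_rpow_of_nonpos h4pos (by linarith) htneg.le
        have h2 : ((4:ℝ) ^ (m+1)) ^ t = ((4:ℝ) ^ t) ^ (m + 1) := by
          rw [← Real.rpow_natCast (4:ℝ) (m+1), ← Real.rpow_mul (by norm_num),
            mul_comm, Real.rpow_mul (by norm_num), Real.rpow_natCast]
        have h3 : atil j (f (m, b)) ^ 2 ≤ 1 := by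
          have := atil_le_one j hj (f (m, b))
          have h0 := atil_nonneg j (f (m, b))
          nlinarith
        calc (1 + ((f (m, b) : ℤ) : ℝ) ^ 2) ^ t * atil j (f (m, b)) ^ 2
            ≤ (1 + ((f (m, b) : ℤ) : ℝ) ^ 2) ^ t * 1 := by
              apply mul_le_mul_of_nonneg_left h3 (Real.rpow_nonneg (by positivity) t)
          _ = (1 + ((f (m, b) : ℤ) : ℝ) ^ 2) ^ t := mul_one _
          _ ≤ ((4:ℝ) ^ (m+1)) ^ t := h1
          _ = ((4:ℝ) ^ t) ^ (m + 1) := h2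
      calc g (f (m, b)) ≤ ENNReal.ofReal (((4:ℝ) ^ t) ^ (m + 1)) :=
            ENNReal.ofReal_le_ofReal hstep
        _ = q ^ (m + 1) := by
            rw [hq, ← ENNReal.ofReal_pow (Real.rpow_nonneg (by norm_num) t)]
    calc ∑' k : ℤ, g k = ∑' p : ℕ × Bool, g (f p) := heq
      _ ≤ ∑' p : ℕ × Bool, q ^ (p.1 + 1) := ENNReal.tsum_le_tsum hbound
      _ = ∑' m : ℕ, ∑' _ : Bool, q ^ (m + 1) := by
          rw [← ENNReal.tsum_prod]
      _ = ∑' m : ℕ, 2 * q ^ (m + 1) := by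
          apply tsum_congr; intro m
          rw [tsum_bool, two_mul]
      _ = 2 * (q * (1 - q)⁻¹) := by
          rw [ENNReal.tsum_mul_left, ENNReal.tsum_geometric_add_one]
      _ < ⊤ := by
          apply ENNReal.mul_lt_top (by norm_num)
          apply ENNReal.mul_lt_top (lt_of_lt_of_le hq1 le_top)
          rw [ENNReal.inv_lt_top]
          exact tsub_pos_of_lt hq1
  calc (∑' n : Fin d → ℤ, ENNReal.ofReal (jpn n ^ (2 * s) * (aseq j d n) ^ 2))
      ≤ ∑' n : Fin d → ℤ, ∏ i, g (n i) := ENNReal.tsum_le_tsum key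
    _ = (∑' k : ℤ, g k) ^ d := tsum_pi_prod g d
    _ < ⊤ := ENNReal.pow_lt_top hG
end

section
/- Let d ≥ 1 and j ≥ 2 be integers and let α and σ be real numbers satisfying (j-1)d/(2j) < 1 + α < d/2 and σ < j(α + 1 - d/2). Then ∑_{n ∈ ℤ^d} ⟨n⟩^{2σ} ∑_{(n_1,…,n_j) ∈ (ℤ^d)^j, n_1+⋯+n_j = n} ⟨n_1⟩^{-2(1+α)} ⋯ ⟨n_j⟩^{-2(1+α)} < ∞. -/
open scoped ENNReal NNReal BigOperators
open scoped Classical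

namespace S10

variable {d : ℕ}

lemma sumsq_nonneg (n : Fin d → ℤ) : (0:ℝ) ≤ ∑ i, ((n i : ℝ))^2 :=
  Finset.sum_nonneg fun i _ => sq_nonneg _

lemma jpn_one_le (n : Fin d → ℤ) : 1 ≤ jpn n := by
  have := sumsq_nonneg n
  rw [show (1:ℝ) = Real.sqrt 1 by simp]
  exact Real.sqrt_le_sqrt (by linarith)

lemma jpn_pos (n : Fin d → ℤ) : 0 < jpn n := lt_of_lt_of_le one_pos (jpn_one_le n)

lemma jpn_sq (n : Fin d → ℤ) : jpn n ^ 2 = 1 + ∑ i, ((n i : ℝ))^2 :=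
  Real.sq_sqrt (by linarith [sumsq_nonneg n])

/-- triangle-type inequality -/
lemma enorm_sub (n m : Fin d → ℤ) :
    Real.sqrt (∑ i, ((n i : ℝ))^2) - Real.sqrt (∑ i, ((m i : ℝ))^2)
      ≤ Real.sqrt (∑ i, (((n - m) i : ℝ))^2) := by
  let x : EuclideanSpace ℝ (Fin d) := WithLp.toLp 2 (fun i => (n i : ℝ))
  let y : EuclideanSpace ℝ (Fin d) := WithLp.toLp 2 (fun i => (m i : ℝ))
  have hx : ‖x‖ = Real.sqrt (∑ i, ((n i : ℝ))^2) := by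
    rw [EuclideanSpace.norm_eq]; congr 1
    exact Finset.sum_congr rfl fun i _ => by rw [Real.norm_eq_abs, sq_abs]
  have hy : ‖y‖ = Real.sqrt (∑ i, ((m i : ℝ))^2) := by
    rw [EuclideanSpace.norm_eq]; congr 1
    exact Finset.sum_congr rfl fun i _ => by rw [Real.norm_eq_abs, sq_abs]
  have hxy : ‖x - y‖ = Real.sqrt (∑ i, (((n - m) i : ℝ))^2) := by
    rw [EuclideanSpace.norm_eq]; congr 1
    refine Finset.sum_congr rfl fun i _ => ?_
    rw [Real.norm_eq_abs, sq_abs]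
    simp [x, y]
  calc Real.sqrt (∑ i, ((n i : ℝ))^2) - Real.sqrt (∑ i, ((m i : ℝ))^2)
      = ‖x‖ - ‖y‖ := by rw [hx, hy]
    _ ≤ ‖x - y‖ := norm_sub_norm_le x y
    _ = _ := hxy

lemma G1 (n m : Fin d → ℤ) (h : 2 * jpn m ≤ jpn n) : jpn n ≤ 4 * jpn (n - m) := by
  set X := Real.sqrt (∑ i, ((n i : ℝ))^2) with hX
  set Y := Real.sqrt (∑ i, ((m i : ℝ))^2) with hY
  set Z := Real.sqrt (∑ i, (((n - m) i : ℝ))^2) with hZ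
  have hX0 : 0 ≤ X := Real.sqrt_nonneg _
  have hY0 : 0 ≤ Y := Real.sqrt_nonneg _
  have hZ0 : 0 ≤ Z := Real.sqrt_nonneg _
  have hXsq : X^2 = ∑ i, ((n i : ℝ))^2 := Real.sq_sqrt (sumsq_nonneg n)
  have hYsq : Y^2 = ∑ i, ((m i : ℝ))^2 := Real.sq_sqrt (sumsq_nonneg m)
  have hZsq : Z^2 = ∑ i, (((n - m) i : ℝ))^2 := Real.sq_sqrt (sumsq_nonneg (n - m))
  have htri : X - Y ≤ Z := enorm_sub n m
  have h2 : 4 * (1 + Y^2) ≤ 1 + X^2 := by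
    have h' : (2 * jpn m)^2 ≤ (jpn n)^2 := by
      have := jpn_pos m
      nlinarith [jpn_pos n]
    rw [mul_pow, jpn_sq, jpn_sq] at h'
    rw [hYsq, hXsq]; linarith
  have hxy : 2 * Y ≤ X := by
    have h4 : (2*Y)^2 ≤ X^2 := by nlinarith
    nlinarith
  have hz2 : (X - Y)^2 ≤ Z^2 := by nlinarith
  have goal2 : 1 + X^2 ≤ 16 * (1 + Z^2) := by
    nlinarith [mul_nonneg (by linarith : (0:ℝ) ≤ X - 2*Y) (by linarith : (0:ℝ) ≤ 15*X - 2*Y)]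
  have hsq : jpn n ^ 2 ≤ (4 * jpn (n - m))^2 := by
    rw [mul_pow, jpn_sq, jpn_sq, ← hXsq, ← hZsq]; linarith
  nlinarith [jpn_pos n, jpn_pos (n - m)]

lemma rpow_neg_le_of_le {x y c t : ℝ} (hx : 0 < x) (hc : 0 < c) (h : x ≤ c * y) (ht : 0 ≤ t) :
    y ^ (-t) ≤ c ^ t * x ^ (-t) := by
  have hy : 0 < y := by nlinarith
  have h1 : x / c ≤ y := (div_le_iff₀' hc).mpr h
  have h2 : y ^ (-t) ≤ (x / c) ^ (-t) :=
    Real.rpow_le_rpow_of_nonpos (by positivity) h1 (neg_nonpos.mpr ht)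
  calc y ^ (-t) ≤ (x / c) ^ (-t) := h2
    _ = x ^ (-t) / c ^ (-t) := Real.div_rpow hx.le hc.le (-t)
    _ = c ^ t * x ^ (-t) := by rw [Real.rpow_neg hc.le]; field_simp

lemma rpow_neg_add {x : ℝ} (hx : 0 < x) (s t : ℝ) :
    x ^ (-(s + t)) = x ^ (-s) * x ^ (-t) := by
  rw [show -(s+t) = -s + -t by ring, Real.rpow_add hx]

lemma PWreal (P Q R a b e : ℝ) (hP : 1 ≤ P) (hQ : 1 ≤ Q) (hR : 1 ≤ R)
    (hg1 : 2*Q ≤ P → P ≤ 4*R) (hg2 : 2*R ≤ P → P ≤ 4*Q)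
    (ha : 0 < a) (hb : 0 < b) (hae : a ≤ e) (hbe : b ≤ e) (habe : e < a+b) :
    Q^(-a) * R^(-b) ≤ 4^(a+b) * P^(-(a+b-e)) * (Q^(-e) + R^(-e)) := by
  have hP0 : (0:ℝ) < P := lt_of_lt_of_le one_pos hP
  have hQ0 : (0:ℝ) < Q := lt_of_lt_of_le one_pos hQ
  have hR0 : (0:ℝ) < R := lt_of_lt_of_le one_pos hR
  have hg : 0 < a + b - e := by linarith
  have h4 : (0:ℝ) < 4 := by norm_num
  have h2 : (0:ℝ) < 2 := by norm_num
  by_cases hc : 2*Q ≤ P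
  · have hPR : P ≤ 4*R := hg1 hc
    have hQR : Q ≤ 2*R := by linarith
    have hconst : (4:ℝ)^(a+b-e) * 2^(e-a) ≤ 4^(a+b) := by
      calc (4:ℝ)^(a+b-e) * 2^(e-a) ≤ 4^(a+b-e) * 4^(e-a) :=
            mul_le_mul_of_nonneg_left
              (Real.rpow_le_rpow (by norm_num) (by norm_num) (by linarith)) (by positivity)
        _ = 4^b := by rw [← Real.rpow_add h4, show a+b-e+(e-a) = b by ring]
        _ ≤ 4^(a+b) := Real.rpow_le_rpow_of_exponent_le (by norm_num) (by linarith)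
    calc Q^(-a) * R^(-b)
        = Q^(-a) * (R^(-(a+b-e)) * R^(-(e-a))) := by
          rw [← rpow_neg_add hR0, show a+b-e+(e-a) = b by ring]
      _ ≤ Q^(-a) * ((4^(a+b-e) * P^(-(a+b-e))) * (2^(e-a) * Q^(-(e-a)))) :=
          mul_le_mul_of_nonneg_left
            (mul_le_mul (rpow_neg_le_of_le hP0 h4 hPR hg.le)
              (rpow_neg_le_of_le hQ0 h2 hQR (by linarith)) (by positivity) (by positivity))
            (by positivity)
      _ = (4^(a+b-e) * 2^(e-a)) * P^(-(a+b-e)) * (Q^(-a) * Q^(-(e-a))) := by ring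
      _ = (4^(a+b-e) * 2^(e-a)) * P^(-(a+b-e)) * Q^(-e) := by
          rw [← rpow_neg_add hQ0, show a+(e-a) = e by ring]
      _ ≤ 4^(a+b) * P^(-(a+b-e)) * (Q^(-e) + R^(-e)) :=
          mul_le_mul (mul_le_mul_of_nonneg_right hconst (by positivity))
            (le_add_of_nonneg_right (by positivity)) (by positivity) (by positivity)
  · by_cases hc2 : 2*R ≤ P
    · have hPQ : P ≤ 4*Q := hg2 hc2
      have hRQ : R ≤ 2*Q := by linarith
      have hconst : (4:ℝ)^(a+b-e) * 2^(e-b) ≤ 4^(a+b) := by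
        calc (4:ℝ)^(a+b-e) * 2^(e-b) ≤ 4^(a+b-e) * 4^(e-b) :=
              mul_le_mul_of_nonneg_left
                (Real.rpow_le_rpow (by norm_num) (by norm_num) (by linarith)) (by positivity)
          _ = 4^a := by rw [← Real.rpow_add h4, show a+b-e+(e-b) = a by ring]
          _ ≤ 4^(a+b) := Real.rpow_le_rpow_of_exponent_le (by norm_num) (by linarith)
      calc Q^(-a) * R^(-b)
          = (Q^(-(a+b-e)) * Q^(-(e-b))) * R^(-b) := by
            rw [← rpow_neg_add hQ0, show a+b-e+(e-b) = a by ring]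
        _ ≤ ((4^(a+b-e) * P^(-(a+b-e))) * (2^(e-b) * R^(-(e-b)))) * R^(-b) :=
            mul_le_mul_of_nonneg_right
              (mul_le_mul (rpow_neg_le_of_le hP0 h4 hPQ hg.le)
                (rpow_neg_le_of_le hR0 h2 hRQ (by linarith)) (by positivity) (by positivity))
              (by positivity)
        _ = (4^(a+b-e) * 2^(e-b)) * P^(-(a+b-e)) * (R^(-b) * R^(-(e-b))) := by ring
        _ = (4^(a+b-e) * 2^(e-b)) * P^(-(a+b-e)) * R^(-e) := by
            rw [← rpow_neg_add hR0, show b+(e-b) = e by ring]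
        _ ≤ 4^(a+b) * P^(-(a+b-e)) * (Q^(-e) + R^(-e)) :=
            mul_le_mul (mul_le_mul_of_nonneg_right hconst (by positivity))
              (le_add_of_nonneg_left (by positivity)) (by positivity) (by positivity)
    · push_neg at hc hc2
      have hconst : (2:ℝ)^(a+b-e) ≤ 4^(a+b) := by
        calc (2:ℝ)^(a+b-e) ≤ 4^(a+b-e) :=
              Real.rpow_le_rpow (by norm_num) (by norm_num) hg.le
          _ ≤ 4^(a+b) := Real.rpow_le_rpow_of_exponent_le (by norm_num) (by linarith)
      by_cases hQR : Q ≤ R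
      · calc Q^(-a) * R^(-b)
            ≤ Q^(-a) * Q^(-b) :=
              mul_le_mul_of_nonneg_left
                (Real.rpow_le_rpow_of_nonpos hQ0 hQR (neg_nonpos.mpr hb.le)) (by positivity)
          _ = Q^(-(a+b-e)) * Q^(-e) := by
              rw [← rpow_neg_add hQ0, ← rpow_neg_add hQ0, show a+b-e+e = a+b by ring]
          _ ≤ (2^(a+b-e) * P^(-(a+b-e))) * Q^(-e) :=
              mul_le_mul_of_nonneg_right (rpow_neg_le_of_le hP0 h2 hc.le hg.le) (by positivity)
          _ = 2^(a+b-e) * P^(-(a+b-e)) * Q^(-e) := by ring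
          _ ≤ 4^(a+b) * P^(-(a+b-e)) * (Q^(-e) + R^(-e)) :=
              mul_le_mul (mul_le_mul_of_nonneg_right hconst (by positivity))
                (le_add_of_nonneg_right (by positivity)) (by positivity) (by positivity)
      · push_neg at hQR
        calc Q^(-a) * R^(-b)
            ≤ R^(-a) * R^(-b) :=
              mul_le_mul_of_nonneg_right
                (Real.rpow_le_rpow_of_nonpos hR0 hQR.le (neg_nonpos.mpr ha.le)) (by positivity)
          _ = R^(-(a+b-e)) * R^(-e) := by
              rw [← rpow_neg_add hR0, ← rpow_neg_add hR0, show a+b-e+e = a+b by ring]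
          _ ≤ (2^(a+b-e) * P^(-(a+b-e))) * R^(-e) :=
              mul_le_mul_of_nonneg_right (rpow_neg_le_of_le hP0 h2 hc2.le hg.le) (by positivity)
          _ = 2^(a+b-e) * P^(-(a+b-e)) * R^(-e) := by ring
          _ ≤ 4^(a+b) * P^(-(a+b-e)) * (Q^(-e) + R^(-e)) :=
              mul_le_mul (mul_le_mul_of_nonneg_right hconst (by positivity))
                (le_add_of_nonneg_left (by positivity)) (by positivity) (by positivity)

/-- 1-D summability -/
lemma sum1d {p : ℝ} (hp : 1/2 < p) :
    Summable (fun x : ℤ => ((1:ℝ) + (x:ℝ)^2) ^ (-p)) := by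
  have key : Summable (fun n : ℕ => ((1:ℝ) + (n:ℝ)^2) ^ (-p)) := by
    have h1 : Summable (fun n : ℕ => ((n:ℝ)+1) ^ (-(2*p))) := by
      have := (Real.summable_nat_rpow (p := -(2*p))).mpr (by linarith)
      have h2 := (summable_nat_add_iff (f := fun n : ℕ => ((n:ℝ)) ^ (-(2*p))) 1).mpr this
      refine h2.congr fun n => ?_
      push_cast; ring_nf
    have h2 : Summable (fun n : ℕ => (2:ℝ)^p * ((n:ℝ)+1) ^ (-(2*p))) := h1.mul_left _
    refine Summable.of_nonneg_of_le (fun n => by positivity) (fun n => ?_) h2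
    have hn1 : (0:ℝ) < (n:ℝ) + 1 := by positivity
    have hineq : ((n:ℝ)+1)^2 ≤ 2 * (1 + (n:ℝ)^2) := by nlinarith [sq_nonneg ((n:ℝ) - 1)]
    have := rpow_neg_le_of_le (x := ((n:ℝ)+1)^2) (y := 1 + (n:ℝ)^2) (c := 2) (t := p)
      (by positivity) two_pos hineq (by linarith)
    calc ((1:ℝ) + (n:ℝ)^2) ^ (-p) ≤ 2^p * (((n:ℝ)+1)^2) ^ (-p) := this
      _ = 2^p * ((n:ℝ)+1) ^ (-(2*p)) := by
          rw [← Real.rpow_natCast ((n:ℝ)+1) 2, ← Real.rpow_mul hn1.le]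
          norm_num
  apply Summable.of_nat_of_neg
  · exact key.congr fun n => by push_cast; ring_nf
  · refine key.congr fun n => ?_
    push_cast; ring_nf

lemma ofReal_prod_of_nonneg {ι : Type*} (s : Finset ι) (f : ι → ℝ) (hf : ∀ i ∈ s, 0 ≤ f i) :
    ENNReal.ofReal (∏ i ∈ s, f i) = ∏ i ∈ s, ENNReal.ofReal (f i) := by
  classical
  induction s using Finset.induction with
  | empty => simp
  | @insert a s ha ih =>
    rw [Finset.prod_insert ha, Finset.prod_insert ha,
      ENNReal.ofReal_mul (hf a (Finset.mem_insert_self a s)),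
      ih (fun i hi => hf i (Finset.mem_insert_of_mem hi))]

lemma tsum_pi_pow (g : ℤ → ℝ≥0∞) : ∀ k : ℕ,
    (∑' m : Fin k → ℤ, ∏ i, g (m i)) = (∑' x : ℤ, g x) ^ k := by
  intro k
  induction k with
  | zero =>
    rw [tsum_eq_single (default : Fin 0 → ℤ) (fun b hb => absurd (Subsingleton.elim b _) hb)]
    simp
  | succ k ih =>
    calc (∑' m : Fin (k+1) → ℤ, ∏ i, g (m i))
        = ∑' p : ℤ × (Fin k → ℤ), ∏ i, g ((Fin.consEquiv (fun _ => ℤ)) p i) :=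
          ((Fin.consEquiv (fun _ => ℤ)).tsum_eq (fun m : Fin (k+1) → ℤ => ∏ i, g (m i))).symm
      _ = ∑' x : ℤ, ∑' w : Fin k → ℤ, g x * ∏ i, g (w i) := by
          rw [ENNReal.tsum_prod']
          refine tsum_congr fun x => tsum_congr fun w => ?_
          rw [show ((Fin.consEquiv (fun _ => ℤ)) (x, w) : Fin (k+1) → ℤ) = Fin.cons x w from rfl,
            Fin.prod_univ_succ]
          simp
      _ = ∑' x : ℤ, g x * ∑' w : Fin k → ℤ, ∏ i, g (w i) := by
          refine tsum_congr fun x => ?_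
          rw [ENNReal.tsum_mul_left]
      _ = (∑' x : ℤ, g x) * (∑' x : ℤ, g x) ^ k := by
          rw [ih, ENNReal.tsum_mul_right]
      _ = (∑' x : ℤ, g x) ^ (k+1) := by ring

lemma sumc (hd : 1 ≤ d) {e : ℝ} (he : (d:ℝ) < e) :
    ∑' m : Fin d → ℤ, ENNReal.ofReal (jpn m ^ (-e)) < ⊤ := by
  have hd0 : (0:ℝ) < d := by exact_mod_cast hd
  set p : ℝ := e / (2*d) with hpdef
  have hp : 1/2 < p := by rw [hpdef, lt_div_iff₀ (by positivity)]; linarith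
  have hp0 : 0 < p := lt_trans (by norm_num) hp
  have he0 : 0 < e := by linarith
  have hpt : ∀ m : Fin d → ℤ, jpn m ^ (-e) ≤ ∏ i, ((1:ℝ) + ((m i : ℝ))^2) ^ (-p) := by
    intro m
    set A : ℝ := 1 + ∑ i, ((m i : ℝ))^2 with hA
    have hA0 : (0:ℝ) < A := by
      have : (0:ℝ) ≤ ∑ i, ((m i : ℝ))^2 := Finset.sum_nonneg fun i _ => sq_nonneg _
      linarith
    have hjpn : jpn m ^ (-e) = A ^ (-(e/2)) := by
      rw [jpn, Real.sqrt_eq_rpow, ← Real.rpow_mul hA0.le]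
      congr 1; ring
    rw [hjpn]
    have step1 : A ^ (-(e/2)) = ∏ _i : Fin d, A ^ (-p) := by
      rw [Finset.prod_const, Finset.card_univ, Fintype.card_fin,
        ← Real.rpow_natCast (A ^ (-p)) d, ← Real.rpow_mul hA0.le]
      congr 1
      rw [hpdef]
      field_simp
    rw [step1]
    refine Finset.prod_le_prod (fun i _ => by positivity) (fun i _ => ?_)
    refine Real.rpow_le_rpow_of_nonpos (by positivity) ?_ (neg_nonpos.mpr hp0.le)
    have : ((m i : ℝ))^2 ≤ ∑ i', ((m i' : ℝ))^2 :=
      Finset.single_le_sum (f := fun i' : Fin d => ((m i' : ℝ))^2)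
        (fun i' _ => sq_nonneg _) (Finset.mem_univ i)
    rw [hA]; linarith
  calc ∑' m : Fin d → ℤ, ENNReal.ofReal (jpn m ^ (-e))
      ≤ ∑' m : Fin d → ℤ, ENNReal.ofReal (∏ i, ((1:ℝ) + ((m i : ℝ))^2) ^ (-p)) :=
        ENNReal.tsum_le_tsum fun m => ENNReal.ofReal_le_ofReal (hpt m)
    _ = ∑' m : Fin d → ℤ, ∏ i, ENNReal.ofReal (((1:ℝ) + ((m i : ℝ))^2) ^ (-p)) :=
        tsum_congr fun m => ofReal_prod_of_nonneg _ _ (fun i _ => by positivity)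
    _ = (∑' x : ℤ, ENNReal.ofReal (((1:ℝ) + ((x : ℝ))^2) ^ (-p))) ^ d :=
        tsum_pi_pow (fun x : ℤ => ENNReal.ofReal (((1:ℝ) + (x:ℝ)^2) ^ (-p))) d
    _ < ⊤ := by
        have hsum := sum1d hp
        have heq : (∑' x : ℤ, ENNReal.ofReal (((1:ℝ) + ((x : ℝ))^2) ^ (-p)))
            = ENNReal.ofReal (∑' x : ℤ, ((1:ℝ) + ((x : ℝ))^2) ^ (-p)) :=
          (ENNReal.ofReal_tsum_of_nonneg (fun x => by positivity) hsum).symm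
        rw [heq]
        exact ENNReal.pow_lt_top ENNReal.ofReal_lt_top

/-- the ENNReal-valued bracket power -/
noncomputable def Jf {d : ℕ} (n : Fin d → ℤ) (t : ℝ) : ℝ≥0∞ := ENNReal.ofReal (jpn n ^ t)

lemma conv (hd : 1 ≤ d) (a b e : ℝ) (ha : 0 < a) (hb : 0 < b)
    (hae : a ≤ e) (hbe : b ≤ e) (habe : e < a + b) (hde : (d:ℝ) < e) :
    ∃ C : ℝ≥0∞, C ≠ ⊤ ∧ ∀ n : Fin d → ℤ,
      (∑' m : Fin d → ℤ, Jf m (-a) * Jf (n - m) (-b)) ≤ C * Jf n (-(a+b-e)) := by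
  set S := ∑' m : Fin d → ℤ, Jf m (-e) with hS
  have hSfin : S < ⊤ := sumc hd hde
  set K := ENNReal.ofReal ((4:ℝ) ^ (a+b)) with hK
  refine ⟨K * (2 * S), ENNReal.mul_ne_top ENNReal.ofReal_ne_top
    (ENNReal.mul_ne_top (by norm_num) hSfin.ne), fun n => ?_⟩
  have hpw : ∀ m : Fin d → ℤ, Jf m (-a) * Jf (n-m) (-b)
      ≤ K * Jf n (-(a+b-e)) * (Jf m (-e) + Jf (n-m) (-e)) := by
    intro m
    have hgeo1 : 2 * jpn m ≤ jpn n → jpn n ≤ 4 * jpn (n - m) := G1 n m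
    have hgeo2 : 2 * jpn (n - m) ≤ jpn n → jpn n ≤ 4 * jpn m := fun h => by
      have := G1 n (n - m) h
      rwa [sub_sub_cancel] at this
    have h := PWreal (jpn n) (jpn m) (jpn (n-m)) a b e (jpn_one_le n) (jpn_one_le m)
      (jpn_one_le (n-m)) hgeo1 hgeo2 ha hb hae hbe habe
    have hjn := jpn_pos n
    have hjm := jpn_pos m
    have hjnm := jpn_pos (n-m)
    calc Jf m (-a) * Jf (n-m) (-b)
        = ENNReal.ofReal (jpn m ^ (-a) * jpn (n-m) ^ (-b)) :=
          (ENNReal.ofReal_mul (by positivity)).symm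
      _ ≤ ENNReal.ofReal (4^(a+b) * jpn n ^ (-(a+b-e)) * (jpn m ^ (-e) + jpn (n-m) ^ (-e))) :=
          ENNReal.ofReal_le_ofReal h
      _ = K * Jf n (-(a+b-e)) * (Jf m (-e) + Jf (n-m) (-e)) := by
          rw [ENNReal.ofReal_mul (by positivity), ENNReal.ofReal_mul (by positivity),
            ENNReal.ofReal_add (by positivity) (by positivity)]
          rfl
  calc (∑' m : Fin d → ℤ, Jf m (-a) * Jf (n-m) (-b))
      ≤ ∑' m : Fin d → ℤ, K * Jf n (-(a+b-e)) * (Jf m (-e) + Jf (n-m) (-e)) :=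
        ENNReal.tsum_le_tsum hpw
    _ = K * Jf n (-(a+b-e)) * ((∑' m : Fin d → ℤ, Jf m (-e)) + ∑' m : Fin d → ℤ, Jf (n-m) (-e)) := by
        rw [ENNReal.tsum_mul_left, ENNReal.tsum_add]
    _ = K * Jf n (-(a+b-e)) * (S + S) := by
        congr 2
        exact (Equiv.subLeft n).tsum_eq (fun m => Jf m (-e))
    _ = K * (2 * S) * Jf n (-(a+b-e)) := by ring

/-- the `k`-fold convolution -/
noncomputable def Tk (d : ℕ) (β : ℝ) (k : ℕ) (n : Fin d → ℤ) : ℝ≥0∞ :=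
  ∑' v : Fin k → (Fin d → ℤ), if (∑ l, v l) = n then ∏ l, Jf (v l) (-β) else 0

lemma Tk_one (β : ℝ) (n : Fin d → ℤ) : Tk d β 1 n = Jf n (-β) := by
  rw [Tk, tsum_eq_single (fun _ : Fin 1 => n) ?h]
  · simp
  case h =>
    intro v hv
    rw [if_neg]
    intro hsum
    apply hv
    funext l
    have hl : l = 0 := Subsingleton.elim l 0
    have hv0 : v 0 = n := by simpa using hsum
    rw [hl, hv0]

lemma Tk_succ (β : ℝ) (k : ℕ) (n : Fin d → ℤ) :
    Tk d β (k+1) n = ∑' m : Fin d → ℤ, Jf m (-β) * Tk d β k (n - m) := by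
  rw [Tk]
  calc (∑' v : Fin (k+1) → (Fin d → ℤ), if (∑ l, v l) = n then ∏ l, Jf (v l) (-β) else 0)
      = ∑' p : (Fin d → ℤ) × (Fin k → (Fin d → ℤ)),
          (if (∑ l, (Fin.consEquiv (fun _ => (Fin d → ℤ))) p l) = n
           then ∏ l, Jf ((Fin.consEquiv (fun _ => (Fin d → ℤ))) p l) (-β) else 0) :=
        ((Fin.consEquiv (fun _ => (Fin d → ℤ))).tsum_eq _).symm
    _ = ∑' x : Fin d → ℤ, ∑' w : Fin k → (Fin d → ℤ),
          (if (∑ l, w l) = n - x then Jf x (-β) * ∏ l, Jf (w l) (-β) else 0) := by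
        rw [ENNReal.tsum_prod']
        refine tsum_congr fun x => tsum_congr fun w => ?_
        rw [show ((Fin.consEquiv (fun _ => (Fin d → ℤ))) (x, w) : Fin (k+1) → (Fin d → ℤ))
            = Fin.cons x w from rfl]
        rw [show (∑ l, (Fin.cons x w : Fin (k+1) → (Fin d → ℤ)) l) = x + ∑ l, w l from by
          rw [Fin.sum_univ_succ]; simp]
        rw [show (∏ l, Jf ((Fin.cons x w : Fin (k+1) → (Fin d → ℤ)) l) (-β))
            = Jf x (-β) * ∏ l, Jf (w l) (-β) from by rw [Fin.prod_univ_succ]; simp]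
        by_cases hxw : x + ∑ l, w l = n
        · rw [if_pos hxw, if_pos (by rw [eq_sub_iff_add_eq, add_comm]; exact hxw)]
        · rw [if_neg hxw, if_neg (fun h => hxw (by rw [eq_sub_iff_add_eq, add_comm] at h; exact h))]
    _ = ∑' x : Fin d → ℤ, Jf x (-β) * Tk d β k (n - x) := by
        refine tsum_congr fun x => ?_
        rw [Tk, ← ENNReal.tsum_mul_left]
        refine tsum_congr fun w => ?_
        rw [mul_ite, mul_zero]

lemma Tk_bound (hd : 1 ≤ d) (β e : ℝ) (hde : (d:ℝ) < e) (hβ : 0 < β) (hβe : β ≤ e) :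
    ∀ k : ℕ, 0 < ((k:ℝ)+1) * β - (k:ℝ) * e →
    ∃ C : ℝ≥0∞, C ≠ ⊤ ∧ ∀ n : Fin d → ℤ,
      Tk d β (k+1) n ≤ C * Jf n (-(((k:ℝ)+1) * β - (k:ℝ) * e)) := by
  intro k
  induction k with
  | zero =>
    intro _
    refine ⟨1, ENNReal.one_ne_top, fun n => ?_⟩
    rw [Tk_one, one_mul, show (((0:ℕ):ℝ)+1) * β - ((0:ℕ):ℝ) * e = β by push_cast; ring]
  | succ k ih =>
    intro hpos
    push_cast at hpos
    have hk0 : (0:ℝ) ≤ (k:ℝ) := Nat.cast_nonneg k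
    have hδk : 0 < ((k:ℝ)+1) * β - (k:ℝ) * e := by nlinarith
    obtain ⟨C, hC, hCb⟩ := ih hδk
    have hδk_le : ((k:ℝ)+1) * β - (k:ℝ) * e ≤ e := by nlinarith
    have habe : e < β + (((k:ℝ)+1) * β - (k:ℝ) * e) := by nlinarith
    obtain ⟨C', hC', hC'b⟩ := conv hd β (((k:ℝ)+1) * β - (k:ℝ) * e) e hβ hδk hβe hδk_le habe hde
    refine ⟨C' * C, ENNReal.mul_ne_top hC' hC, fun n => ?_⟩
    have hexp : β + (((k:ℝ)+1) * β - (k:ℝ) * e) - e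
        = (((k+1:ℕ):ℝ)+1) * β - ((k+1:ℕ):ℝ) * e := by push_cast; ring
    calc Tk d β (k+1+1) n
        = ∑' m : Fin d → ℤ, Jf m (-β) * Tk d β (k+1) (n - m) := Tk_succ β (k+1) n
      _ ≤ ∑' m : Fin d → ℤ, Jf m (-β) * (C * Jf (n-m) (-(((k:ℝ)+1) * β - (k:ℝ) * e))) :=
          ENNReal.tsum_le_tsum fun m => mul_le_mul_right (hCb _) _
      _ = C * ∑' m : Fin d → ℤ, Jf m (-β) * Jf (n-m) (-(((k:ℝ)+1) * β - (k:ℝ) * e)) := by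
          rw [← ENNReal.tsum_mul_left]
          exact tsum_congr fun m => by ring
      _ ≤ C * (C' * Jf n (-(β + (((k:ℝ)+1) * β - (k:ℝ) * e) - e))) :=
          mul_le_mul_right (hC'b n) C
      _ = (C' * C) * Jf n (-((((k+1:ℕ):ℝ)+1) * β - ((k+1:ℕ):ℝ) * e)) := by
          rw [hexp]; ring

end S10

open S10 in
/-- summability of the iterated discrete convolution (Z8):
for `(j-1)d/(2j) < 1 + α < d/2` and `σ < j(α + 1 - d/2)`,
`∑_{n} ⟨n⟩^{2σ} ∑_{n₁+⋯+n_j = n} ⟨n₁⟩^{-2(1+α)} ⋯ ⟨n_j⟩^{-2(1+α)} < ∞`. -/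
theorem stmt10 (d j : ℕ) (hd : 1 ≤ d) (hj : 2 ≤ j) (α σ : ℝ)
    (h1 : ((j : ℝ) - 1) * (d : ℝ) / (2 * (j : ℝ)) < 1 + α)
    (h2 : 1 + α < (d : ℝ) / 2)
    (h3 : σ < (j : ℝ) * (α + 1 - (d : ℝ) / 2)) :
    (∑' n : Fin d → ℤ, ENNReal.ofReal (jpn n ^ (2 * σ)) *
      ∑' v : Fin j → (Fin d → ℤ),
        (if (∑ l, v l) = n
         then ∏ l, ENNReal.ofReal (jpn (v l) ^ (-2 * (1 + α)))
         else 0)) < ⊤ := by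
  classical
  have hjR : (2:ℝ) ≤ (j:ℝ) := by exact_mod_cast hj
  have hdR : (1:ℝ) ≤ (d:ℝ) := by exact_mod_cast hd
  set β : ℝ := 2*(1+α) with hβdef
  have hq : (0:ℝ) ≤ ((j:ℝ)-1) * (d:ℝ) / (2*(j:ℝ)) := by
    apply div_nonneg
    · nlinarith
    · linarith
  have hβ0 : 0 < β := by rw [hβdef]; linarith
  have hβd : β < (d:ℝ) := by rw [hβdef]; linarith
  have h2j : (0:ℝ) < 2*(j:ℝ) := by linarith
  rw [div_lt_iff₀ h2j] at h1
  have hγpos : 0 < (j:ℝ)*β - ((j:ℝ)-1)*(d:ℝ) := by rw [hβdef]; nlinarith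
  have hγd : (j:ℝ)*β - ((j:ℝ)-1)*(d:ℝ) - (d:ℝ) = 2*((j:ℝ)*(α+1-(d:ℝ)/2)) := by
    rw [hβdef]; ring
  have hεt : 0 < (j:ℝ)*β - ((j:ℝ)-1)*(d:ℝ) - (d:ℝ) - 2*σ := by linarith
  set γ : ℝ := (j:ℝ)*β - ((j:ℝ)-1)*(d:ℝ) with hγdef
  set εt : ℝ := γ - (d:ℝ) - 2*σ with hεtdef
  set ε : ℝ := min γ εt / (2*(j:ℝ)) with hεdef
  have hε0 : 0 < ε := div_pos (lt_min hγpos hεt) h2j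
  have hjε : (j:ℝ)*ε = min γ εt / 2 := by
    rw [hεdef]; field_simp
  have hj1ε : ((j:ℝ)-1)*ε ≤ min γ εt / 2 := by nlinarith
  set e : ℝ := (d:ℝ) + ε with hedef
  have hde : (d:ℝ) < e := by rw [hedef]; linarith
  have hβe : β ≤ e := by rw [hedef]; linarith
  obtain ⟨k, hkj⟩ : ∃ k, j = k + 1 := ⟨j - 1, by omega⟩
  have hkR : ((k:ℝ)) = (j:ℝ) - 1 := by rw [hkj]; push_cast; ring
  have hδpos : 0 < ((k:ℝ)+1)*β - (k:ℝ)*e := by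
    rw [hkR, hedef]
    have hmin : min γ εt ≤ γ := min_le_left _ _
    nlinarith
  obtain ⟨C, hC, hCb⟩ := Tk_bound hd β e hde hβ0 hβe k hδpos
  have hδ2σ : (d:ℝ) < ((((k:ℝ)+1)*β - (k:ℝ)*e) - 2*σ) := by
    rw [hkR, hedef]
    have hmin : min γ εt ≤ εt := min_le_right _ _
    nlinarith
  have hexp : (-2) * (1 + α) = -β := by rw [hβdef]; ring
  have hTk : ∀ n : Fin d → ℤ, (∑' v : Fin j → (Fin d → ℤ),
        (if (∑ l, v l) = n
         then ∏ l, ENNReal.ofReal (jpn (v l) ^ (-2 * (1 + α)))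
         else 0)) = Tk d β j n := by
    intro n
    rw [Tk]
    refine tsum_congr fun v => ?_
    refine if_congr Iff.rfl ?_ rfl
    refine Finset.prod_congr rfl fun l _ => ?_
    rw [Jf, hexp]
  have hgoal_eq : (∑' n : Fin d → ℤ, ENNReal.ofReal (jpn n ^ (2 * σ)) *
      ∑' v : Fin j → (Fin d → ℤ),
        (if (∑ l, v l) = n
         then ∏ l, ENNReal.ofReal (jpn (v l) ^ (-2 * (1 + α)))
         else 0)) = ∑' n : Fin d → ℤ, Jf n (2*σ) * Tk d β j n :=
    tsum_congr fun n => by rw [hTk n]; rfl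
  rw [hgoal_eq, hkj]
  calc (∑' n : Fin d → ℤ, Jf n (2*σ) * Tk d β (k+1) n)
      ≤ ∑' n : Fin d → ℤ, Jf n (2*σ) * (C * Jf n (-(((k:ℝ)+1)*β - (k:ℝ)*e))) :=
        ENNReal.tsum_le_tsum fun n => mul_le_mul_right (hCb n) _
    _ = C * ∑' n : Fin d → ℤ, Jf n (2*σ) * Jf n (-(((k:ℝ)+1)*β - (k:ℝ)*e)) := by
        rw [← ENNReal.tsum_mul_left]
        exact tsum_congr fun n => by ring
    _ = C * ∑' n : Fin d → ℤ, ENNReal.ofReal (jpn n ^ (-(((((k:ℝ)+1)*β - (k:ℝ)*e)) - 2*σ))) := by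
        congr 1
        refine tsum_congr fun n => ?_
        rw [Jf, Jf, ← ENNReal.ofReal_mul (Real.rpow_nonneg (jpn_pos n).le _), ← Real.rpow_add (jpn_pos n)]
        congr 2
        ring
    _ < ⊤ := ENNReal.mul_lt_top hC.lt_top (sumc hd hδ2σ)
end

section
/- Let d ≥ 1 and j ≥ 2 be integers and let α be a real number with 2j(1+α) ≤ (j-1)d. Then the sum ∑ ⟨n_1⟩^{-2(1+α)} ⋯ ⟨n_j⟩^{-2(1+α)}, taken over all tuples (n_1, …, n_j) ∈ (ℤ^d)^j with n_1 + n_2 + ⋯ + n_j = 0, diverges (equals +∞). -/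
open scoped ENNReal NNReal BigOperators
open scoped Classical

lemma one_le_jpn {d : ℕ} (n : Fin d → ℤ) : 1 ≤ jpn n := by
  calc (1:ℝ) = Real.sqrt 1 := Real.sqrt_one.symm
    _ ≤ jpn n := Real.sqrt_le_sqrt
        (le_add_of_nonneg_right (Finset.sum_nonneg fun i _ => sq_nonneg _))

lemma jpn_pos {d : ℕ} (n : Fin d → ℤ) : 0 < jpn n := lt_of_lt_of_le one_pos (one_le_jpn n)

lemma jpn_le {d : ℕ} (n : Fin d → ℤ) (B : ℝ) (hB : ∀ i, |(n i : ℝ)| ≤ B) :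
    jpn n ≤ Real.sqrt (1 + d * B ^ 2) := by
  apply Real.sqrt_le_sqrt
  have : ∑ i, ((n i : ℝ)) ^ 2 ≤ ∑ _i : Fin d, B ^ 2 := by
    apply Finset.sum_le_sum
    intro i _
    exact sq_le_sq' (neg_le_of_abs_le (hB i)) (le_of_abs_le (hB i))
  simpa using this

lemma pow_interval_eq {k k' a a' : ℕ} (ha : a < 2^k) (ha' : a' < 2^k')
    (hV : 2^k + a = 2^k' + a') : k = k' := by
  rcases lt_trichotomy k k' with hlt | he | hgt
  · have h1 : 2^(k+1) ≤ 2^k' := Nat.pow_le_pow_right (by norm_num) hlt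
    have h2 : 2^(k+1) = 2^k * 2 := pow_succ 2 k
    omega
  · exact he
  · have h1 : 2^(k'+1) ≤ 2^k := Nat.pow_le_pow_right (by norm_num) hgt
    have h2 : 2^(k'+1) = 2^k' * 2 := pow_succ 2 k'
    omega

/-- lattice point with coordinates `2^k + m l i`. -/
def latn (r d k : ℕ) (m : Fin r → Fin d → Fin (2^k)) (l : Fin r) : Fin d → ℤ :=
  fun i => 2^k + (m l i : ℤ)

/-- the `j`-tuple with last entry minus the sum of the others. -/
def latg (r d : ℕ) (p : (k : ℕ) × (Fin r → Fin d → Fin (2^k))) (l : Fin (r+1)) :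
    Fin d → ℤ :=
  if hl : (l : ℕ) < r then latn r d p.1 p.2 ⟨l, hl⟩ else -(∑ l', latn r d p.1 p.2 l')

lemma latn_bounds (r d k : ℕ) (m : Fin r → Fin d → Fin (2^k)) (l : Fin r) (i : Fin d) :
    0 ≤ latn r d k m l i ∧ latn r d k m l i ≤ 2 * 2^k := by
  have h1 : ((m l i : ℕ) : ℤ) < (2:ℤ)^k := by exact_mod_cast (m l i).isLt
  have h2 : (0:ℤ) ≤ ((m l i : ℕ) : ℤ) := Int.natCast_nonneg _
  have h3 : (0:ℤ) ≤ 2^k := by positivity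
  constructor
  · simp only [latn]; linarith
  · simp only [latn]; linarith

lemma latg_sum (r d : ℕ) (p : (k : ℕ) × (Fin r → Fin d → Fin (2^k))) :
    ∑ l : Fin (r+1), latg r d p l = 0 := by
  rw [Fin.sum_univ_castSucc]
  have h1 : ∀ i : Fin r, latg r d p i.castSucc = latn r d p.1 p.2 i := by
    intro i
    simp [latg, i.isLt]
  have h2 : latg r d p (Fin.last r) = -(∑ l', latn r d p.1 p.2 l') := by
    simp [latg]
  rw [Finset.sum_congr rfl fun i _ => h1 i, h2]
  simp

lemma latg_eval (r d : ℕ) (p : (k : ℕ) × (Fin r → Fin d → Fin (2^k))) (l : Fin r) :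
    latg r d p (⟨l.1, by omega⟩ : Fin (r+1)) = latn r d p.1 p.2 l := by
  simp [latg, l.isLt]

lemma latg_inj (r d : ℕ) (hr : 1 ≤ r) (hd : 1 ≤ d) :
    Function.Injective (latg r d) := by
  rintro ⟨k, m⟩ ⟨k', m'⟩ hgg
  have hval : ∀ (l : Fin r) (i : Fin d),
      (2:ℤ)^k + (m l i : ℤ) = 2^k' + (m' l i : ℤ) := by
    intro l i
    have h1 := congrFun (congrFun hgg (⟨l.1, by omega⟩ : Fin (r+1))) i
    rw [latg_eval r d ⟨k, m⟩ l, latg_eval r d ⟨k', m'⟩ l] at h1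
    simpa [latn] using h1
  have hk : k = k' := by
    have h0 := hval ⟨0, hr⟩ ⟨0, hd⟩
    have ha : ((m ⟨0,hr⟩ ⟨0,hd⟩ : ℕ)) < 2^k := (m _ _).isLt
    have ha' : ((m' ⟨0,hr⟩ ⟨0,hd⟩ : ℕ)) < 2^k' := (m' _ _).isLt
    refine pow_interval_eq ha ha' ?_
    exact_mod_cast h0
  subst hk
  have hm : m = m' := by
    funext l i
    have h1 := hval l i
    have h2 : (m l i : ℕ) = (m' l i : ℕ) := by omega
    exact Fin.ext h2
  rw [hm]

lemma latg_abs (r d : ℕ) (p : (k : ℕ) × (Fin r → Fin d → Fin (2^k)))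
    (l : Fin (r+1)) (i : Fin d) :
    |latg r d p l i| ≤ (2 * ((r:ℤ) + 1)) * 2^p.1 := by
  obtain ⟨k, m⟩ := p
  have h2k : (0:ℤ) ≤ 2^k := by positivity
  have hrpos : (0:ℤ) ≤ (r:ℤ) := Int.natCast_nonneg _
  by_cases hl : (l : ℕ) < r
  · have hkey := latn_bounds r d k m ⟨l, hl⟩ i
    have he : latg r d ⟨k, m⟩ l i = latn r d k m ⟨l, hl⟩ i := by
      simp [latg, hl]
    rw [he, abs_of_nonneg hkey.1]
    nlinarith [hkey.2]
  · have he : latg r d ⟨k, m⟩ l i = -(∑ l', latn r d k m l' i) := by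
      simp [latg, hl, Finset.sum_apply]
    rw [he, abs_neg]
    have hnn : 0 ≤ ∑ l', latn r d k m l' i :=
      Finset.sum_nonneg fun l' _ => (latn_bounds r d k m l' i).1
    rw [abs_of_nonneg hnn]
    calc ∑ l', latn r d k m l' i ≤ ∑ _l' : Fin r, 2 * 2^k :=
          Finset.sum_le_sum fun l' _ => (latn_bounds r d k m l' i).2
      _ = (r:ℤ) * (2 * 2^k) := by simp [mul_comm]
      _ ≤ (2 * ((r:ℤ) + 1)) * 2^k := by nlinarith

lemma latg_jpn (r d : ℕ) (p : (k : ℕ) × (Fin r → Fin d → Fin (2^k))) (l : Fin (r+1)) :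
    jpn (latg r d p l) ≤ Real.sqrt (1 + d * (2*((r:ℝ)+1))^2) * 2^p.1 := by
  set k := p.1 with hk
  have hB : ∀ i, |((latg r d p l i : ℤ) : ℝ)| ≤ 2*((r:ℝ)+1) * 2^k := by
    intro i
    have h0 := latg_abs r d p l i
    calc |((latg r d p l i : ℤ) : ℝ)| = ((|latg r d p l i| : ℤ) : ℝ) := (Int.cast_abs).symm
      _ ≤ (((2 * ((r:ℤ) + 1)) * 2^k : ℤ) : ℝ) := Int.cast_le.mpr h0
      _ = 2*((r:ℝ)+1) * 2^k := by push_cast; ring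
  refine le_trans (jpn_le _ _ hB) ?_
  have hp1 : (1:ℝ) ≤ (2:ℝ)^k := one_le_pow₀ (by norm_num)
  have h4 : (1:ℝ) + d * (2*((r:ℝ)+1) * 2^k)^2 ≤ (1 + d*(2*((r:ℝ)+1))^2) * ((2:ℝ)^k)^2 := by
    have hd0 : (0:ℝ) ≤ (d:ℝ) := Nat.cast_nonneg _
    have hr0 : (0:ℝ) ≤ (r:ℝ) := Nat.cast_nonneg _
    nlinarith [sq_nonneg ((2:ℝ)^k), sq_nonneg (2*((r:ℝ)+1))]
  calc Real.sqrt (1 + d * (2*((r:ℝ)+1) * 2^k)^2)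
      ≤ Real.sqrt ((1 + d*(2*((r:ℝ)+1))^2) * ((2:ℝ)^k)^2) := Real.sqrt_le_sqrt h4
    _ = Real.sqrt (1 + d*(2*((r:ℝ)+1))^2) * 2^k := by
        rw [Real.sqrt_mul (by positivity), Real.sqrt_sq (by positivity)]

/-- the necessary condition `2j(1+α) > (j-1)d` for (Z8a): if
`2j(1+α) ≤ (j-1)d`, then `∑_{n₁+⋯+n_j = 0} ⟨n₁⟩^{-2(1+α)} ⋯ ⟨n_j⟩^{-2(1+α)} = ∞`. -/
theorem stmt11 (d j : ℕ) (hd : 1 ≤ d) (hj : 2 ≤ j) (α : ℝ)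
    (h : 2 * (j : ℝ) * (1 + α) ≤ ((j : ℝ) - 1) * (d : ℝ)) :
    (∑' v : Fin j → (Fin d → ℤ),
      (if (∑ l, v l) = 0
       then ∏ l, ENNReal.ofReal (jpn (v l) ^ (-2 * (1 + α)))
       else 0)) = ⊤ := by
  set F : (Fin j → (Fin d → ℤ)) → ℝ≥0∞ := fun v =>
    (if (∑ l, v l) = 0
     then ∏ l, ENNReal.ofReal (jpn (v l) ^ (-2 * (1 + α)))
     else 0) with hF
  rcases le_or_gt (1 + α) 0 with hα | hα
  · -- easy case: each factor ≥ 1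
    let i0 : Fin j := ⟨0, by omega⟩
    let i1 : Fin j := ⟨1, by omega⟩
    have hne : i0 ≠ i1 := by simp [i0, i1, Fin.ext_iff]
    let g : (Fin d → ℤ) → (Fin j → (Fin d → ℤ)) := fun w l =>
      (if l = i0 then w else 0) + (if l = i1 then -w else 0)
    have hginj : Function.Injective g := by
      intro w w' hww
      have := congrFun hww i0
      simpa [g, hne] using this
    have hsum : ∀ w, ∑ l, g w l = 0 := by
      intro w
      simp [g, Finset.sum_add_distrib]
    have hge : ∀ w, (1 : ℝ≥0∞) ≤ F (g w) := by
      intro w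
      rw [hF]
      simp only [hsum w, if_true]
      calc (1 : ℝ≥0∞) = ∏ _l : Fin j, 1 := by simp
        _ ≤ _ := by
            apply Finset.prod_le_prod'
            intro l _
            rw [show (1 : ℝ≥0∞) = ENNReal.ofReal 1 by simp]
            exact ENNReal.ofReal_le_ofReal
              (Real.one_le_rpow (one_le_jpn _) (by linarith))
    haveI : Nonempty (Fin d) := ⟨⟨0, hd⟩⟩
    rw [eq_top_iff]
    calc (⊤ : ℝ≥0∞) = ∑' _w : (Fin d → ℤ), (1 : ℝ≥0∞) :=
          (ENNReal.tsum_const_eq_top_of_ne_zero one_ne_zero).symm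
      _ ≤ ∑' w, F (g w) := ENNReal.tsum_le_tsum hge
      _ ≤ ∑' v, F v := ENNReal.tsum_comp_le_tsum_of_injective hginj F
  · -- main case
    obtain ⟨r, rfl⟩ : ∃ r, j = r + 1 := ⟨j - 1, by omega⟩
    have hr : 1 ≤ r := by omega
    set β : ℝ := 2 * (1 + α) with hβdef
    have hβpos : 0 < β := by rw [hβdef]; linarith
    have hβrd : β * ((r:ℝ) + 1) ≤ (r:ℝ) * d := by
      push_cast at h
      nlinarith [h]
    set C : ℝ := Real.sqrt (1 + d * (2*((r:ℝ)+1))^2) with hCdef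
    have hC1 : 1 ≤ C := by
      calc (1:ℝ) = Real.sqrt 1 := Real.sqrt_one.symm
        _ ≤ C := Real.sqrt_le_sqrt (le_add_of_nonneg_right (by positivity))
    have hCpos : 0 < C := lt_of_lt_of_le one_pos hC1
    have hFg : ∀ p : (k : ℕ) × (Fin r → Fin d → Fin (2^k)),
        ENNReal.ofReal (C ^ (-β*((r:ℝ)+1)) * ((2:ℝ)^p.1) ^ (-(((r*d : ℕ)):ℝ)))
          ≤ F (latg r d p) := by
      intro p
      have hNk1 : (1:ℝ) ≤ (2:ℝ)^p.1 := one_le_pow₀ (by norm_num)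
      have hNkpos : (0:ℝ) < (2:ℝ)^p.1 := by positivity
      have hCNpos : (0:ℝ) < C * 2^p.1 := by positivity
      have hfac : ∀ l : Fin (r+1),
          ENNReal.ofReal ((C * 2^p.1) ^ (-β))
            ≤ ENNReal.ofReal (jpn (latg r d p l) ^ (-2*(1+α))) := by
        intro l
        apply ENNReal.ofReal_le_ofReal
        have he : -2*(1+α) = -β := by rw [hβdef]; ring
        rw [he]
        exact Real.rpow_le_rpow_of_nonpos (jpn_pos _) (latg_jpn r d p l) (by linarith)
      have hprod : ENNReal.ofReal ((C*2^p.1) ^ (-β)) ^ (r+1)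
          ≤ ∏ l : Fin (r+1), ENNReal.ofReal (jpn (latg r d p l) ^ (-2*(1+α))) := by
        calc ENNReal.ofReal ((C*2^p.1) ^ (-β)) ^ (r+1)
            = ∏ _l : Fin (r+1), ENNReal.ofReal ((C*2^p.1) ^ (-β)) := by
              simp [Finset.prod_const]
          _ ≤ _ := Finset.prod_le_prod' fun l _ => hfac l
      rw [hF]
      simp only [latg_sum r d p, if_true]
      refine le_trans ?_ hprod
      rw [← ENNReal.ofReal_pow (Real.rpow_nonneg hCNpos.le _)]
      apply ENNReal.ofReal_le_ofReal
      have e1 : ((C*2^p.1) ^ (-β)) ^ (r+1) = (C*2^p.1) ^ (-β * ((r:ℝ)+1)) := by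
        rw [← Real.rpow_natCast ((C*2^p.1) ^ (-β)) (r+1), ← Real.rpow_mul hCNpos.le]
        push_cast
        ring_nf
      rw [e1, Real.mul_rpow hCpos.le hNkpos.le]
      refine mul_le_mul_of_nonneg_left ?_ (Real.rpow_nonneg hCpos.le _)
      apply Real.rpow_le_rpow_of_exponent_le hNk1
      push_cast
      linarith [hβrd]
    have hcard : ∀ k : ℕ, ((Fintype.card (Fin r → Fin d → Fin (2^k)) : ℕ) : ℝ)
        = ((2:ℝ)^k) ^ (r*d) := by
      intro k
      rw [Fintype.card_fun, Fintype.card_fun]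
      push_cast
      rw [Fintype.card_fin, Fintype.card_fin, Fintype.card_fin, ← pow_mul]
      push_cast
      ring
    have hshell : ∀ k : ℕ, ENNReal.ofReal (C ^ (-β*((r:ℝ)+1))) ≤
        ∑' m : (Fin r → Fin d → Fin (2^k)), F (latg r d ⟨k, m⟩) := by
      intro k
      have hNkpos : (0:ℝ) < (2:ℝ)^k := by positivity
      have key : ENNReal.ofReal (C ^ (-β*((r:ℝ)+1)))
          = (Fintype.card (Fin r → Fin d → Fin (2^k)) : ℝ≥0∞) *
            ENNReal.ofReal (C ^ (-β*((r:ℝ)+1)) * ((2:ℝ)^k) ^ (-(((r*d : ℕ)):ℝ))) := by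
        rw [← ENNReal.ofReal_natCast, ← ENNReal.ofReal_mul (Nat.cast_nonneg _)]
        congr 1
        rw [hcard k]
        have hx : ((2:ℝ)^k) ^ (r*d) = ((2:ℝ)^k) ^ ((((r*d):ℕ)):ℝ) :=
          (Real.rpow_natCast _ _).symm
        rw [hx]
        rw [show ((2:ℝ)^k) ^ ((((r*d):ℕ)):ℝ) * (C ^ (-β*((r:ℝ)+1)) * ((2:ℝ)^k) ^ (-(((r*d):ℕ):ℝ)))
            = C ^ (-β*((r:ℝ)+1)) * (((2:ℝ)^k) ^ ((((r*d):ℕ)):ℝ) * ((2:ℝ)^k) ^ (-(((r*d):ℕ):ℝ)))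
          from by ring]
        rw [← Real.rpow_add hNkpos]
        simp
      rw [key, tsum_fintype]
      calc (Fintype.card (Fin r → Fin d → Fin (2^k)) : ℝ≥0∞) *
            ENNReal.ofReal (C ^ (-β*((r:ℝ)+1)) * ((2:ℝ)^k) ^ (-(((r*d : ℕ)):ℝ)))
          = ∑ _m : (Fin r → Fin d → Fin (2^k)),
              ENNReal.ofReal (C ^ (-β*((r:ℝ)+1)) * ((2:ℝ)^k) ^ (-(((r*d : ℕ)):ℝ))) := by
            simp [Finset.sum_const, nsmul_eq_mul]
        _ ≤ ∑ m : (Fin r → Fin d → Fin (2^k)), F (latg r d ⟨k, m⟩) :=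
            Finset.sum_le_sum fun m _ => hFg ⟨k, m⟩
    have hεne : ENNReal.ofReal (C ^ (-β*((r:ℝ)+1))) ≠ 0 := by
      simp only [ne_eq, ENNReal.ofReal_eq_zero, not_le]
      exact Real.rpow_pos_of_pos hCpos _
    rw [eq_top_iff]
    calc (⊤:ℝ≥0∞) = ∑' _k : ℕ, ENNReal.ofReal (C ^ (-β*((r:ℝ)+1))) :=
          (ENNReal.tsum_const_eq_top_of_ne_zero hεne).symm
      _ ≤ ∑' k : ℕ, ∑' m : (Fin r → Fin d → Fin (2^k)), F (latg r d ⟨k, m⟩) :=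
          ENNReal.tsum_le_tsum hshell
      _ = ∑' p : (k : ℕ) × (Fin r → Fin d → Fin (2^k)), F (latg r d p) :=
          (ENNReal.tsum_sigma' fun p => F (latg r d p)).symm
      _ ≤ ∑' v, F v := ENNReal.tsum_comp_le_tsum_of_injective (latg_inj r d hr hd) F
end

section
/- Let d ≥ 1 and j ≥ 2 be integers, let ã : ℤ → [0,∞) be any even sequence (ã_{-k} = ã_k for all k ∈ ℤ), and set a_n = ã_{n⁽¹⁾}⋯ã_{n⁽ᵈ⁾} for n = (n⁽¹⁾,…,n⁽ᵈ⁾) ∈ ℤ^d. Then for every natural number N, ∑_{(n_1,…,n_j) ∈ (ℤ^d)^j, |n_ℓ| ≤ N for all ℓ, n_1+⋯+n_j = 0} ∏_{ℓ=1}^{j} a_{n_ℓ}^2 ≥ ∏_{i=1}^{d} ( ∑ ( ∏_{ℓ=1}^{j-1} ã_{k_ℓ}^2 ) · ã_{k_1+⋯+k_{j-1}}^2 ), where the inner sum on the right-hand side is over all integer tuples (k_1, …, k_{j-1}) with 0 ≤ k_1 ≤ k_2 ≤ ⋯ ≤ k_{j-1} and k_1 + k_2 + ⋯ + k_{j-1}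 ≤ N/√d. -/
open scoped ENNReal NNReal BigOperators
open scoped Classical

lemma aux_tsum_pi {X : Type*} : ∀ (n : ℕ) (f : Fin n → X → ℝ≥0∞),
    ∑' g : Fin n → X, ∏ i, f i (g i) = ∏ i, ∑' x, f i x := by
  intro n
  induction n with
  | zero =>
    intro f
    haveI : Unique (Fin 0 → X) := ⟨⟨fun i => i.elim0⟩, fun b => funext fun i => i.elim0⟩
    simp only [Finset.univ_eq_empty, Finset.prod_empty]
    rw [tsum_eq_single default (fun b hb => absurd (Unique.eq_default b) hb)]
  | succ n ih =>
    intro f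
    rw [← (Fin.consEquiv (fun _ : Fin (n+1) => X)).tsum_eq, Fin.prod_univ_succ]
    have : ∑' p : X × (Fin n → X),
        ∏ i : Fin (n+1), f i ((Fin.consEquiv (fun _ : Fin (n+1) => X)) p i)
        = ∑' p : X × (Fin n → X), f 0 p.1 * ∏ i : Fin n, f i.succ (p.2 i) := by
      refine tsum_congr fun p => ?_
      rw [Fin.prod_univ_succ]
      simp [Fin.consEquiv, Fin.cons_succ, Fin.cons_zero]
    rw [this, ENNReal.tsum_prod']
    simp_rw [ENNReal.tsum_mul_left]
    rw [ENNReal.tsum_mul_right]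
    rw [ih (fun i => f i.succ)]

/-- the tensorization lower bound (Z18)–(Z18b): for any even nonnegative
sequence `atl : ℤ → [0,∞)` with associated tensor sequence `a_n = atl_{n⁽¹⁾} ⋯ atl_{n⁽ᵈ⁾}`,
the zero-frequency `j`-fold autocorrelation sum over `|n_ℓ| ≤ N` is bounded below by the
`d`-th power of the one-dimensional sum over ordered nonnegative tuples
`0 ≤ k₁ ≤ ⋯ ≤ k_{j-1}` with `k₁ + ⋯ + k_{j-1} ≤ N/√d`. -/
theorem stmt12 (d j : ℕ) (hd : 1 ≤ d) (hj : 2 ≤ j)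
    (atl : ℤ → ℝ) (hpos : ∀ k, 0 ≤ atl k) (heven : ∀ k : ℤ, atl (-k) = atl k) (N : ℕ) :
    (∑' k : Fin (j - 1) → ℤ,
        (if (∀ l, 0 ≤ k l) ∧ Monotone k ∧ (((∑ l, k l : ℤ) : ℝ) ≤ (N : ℝ) / Real.sqrt d)
         then ENNReal.ofReal ((∏ l, (atl (k l)) ^ 2) * (atl (∑ l, k l)) ^ 2)
         else 0)) ^ d ≤
      ∑' v : Fin j → (Fin d → ℤ),
        (if (∀ l, Real.sqrt (∑ i, ((v l i : ℝ)) ^ 2) ≤ (N : ℝ)) ∧ (∑ l, v l) = 0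
         then ENNReal.ofReal (∏ l, (∏ i, atl (v l i)) ^ 2)
         else 0) := by
  obtain ⟨m, rfl⟩ : ∃ m, j = m + 1 := ⟨j - 1, (Nat.succ_pred_eq_of_pos (by omega)).symm⟩
  rw [Nat.add_sub_cancel]
  set F : (Fin m → ℤ) → ℝ≥0∞ := fun k =>
    if (∀ l, 0 ≤ k l) ∧ Monotone k ∧ (((∑ l, k l : ℤ) : ℝ) ≤ (N : ℝ) / Real.sqrt d)
    then ENNReal.ofReal ((∏ l, (atl (k l)) ^ 2) * (atl (∑ l, k l)) ^ 2)
    else 0 with hF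
  set G : (Fin (m+1) → Fin d → ℤ) → ℝ≥0∞ := fun v =>
    if (∀ l, Real.sqrt (∑ i, ((v l i : ℝ)) ^ 2) ≤ (N : ℝ)) ∧ (∑ l, v l) = 0
    then ENNReal.ofReal (∏ l, (∏ i, atl (v l i)) ^ 2)
    else 0 with hG
  have hstep : (∑' k : Fin m → ℤ, F k) ^ d = ∑' K : Fin d → (Fin m → ℤ), ∏ i, F (K i) := by
    rw [aux_tsum_pi d (fun _ => F)]
    rw [Finset.prod_const, Finset.card_univ, Fintype.card_fin]
  rw [hstep]
  -- the injection
  set e : (Fin d → Fin m → ℤ) → (Fin (m+1) → Fin d → ℤ) := fun K =>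
    Fin.snoc (fun (l : Fin m) (i : Fin d) => K i l) (fun i => -∑ l, K i l) with he
  have einj : Function.Injective e := by
    intro K K' h
    funext i l
    have := congrFun (congrFun h l.castSucc) i
    simpa [e, Fin.snoc_castSucc] using this
  have hdpos : (0:ℝ) < Real.sqrt d := Real.sqrt_pos.2 (by exact_mod_cast hd)
  have hNd : (0:ℝ) ≤ (N : ℝ) / Real.sqrt d := by positivity
  refine Summable.tsum_le_tsum_of_inj e einj (fun _ _ => zero_le) (fun K => ?_)
    ENNReal.summable ENNReal.summable
  by_cases hK : ∀ i, (∀ l, 0 ≤ K i l) ∧ Monotone (K i) ∧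
      (((∑ l, K i l : ℤ) : ℝ) ≤ (N : ℝ) / Real.sqrt d)
  · -- condition on e K holds
    have hsum0 : ∀ i, (0:ℤ) ≤ ∑ l, K i l := fun i =>
      Finset.sum_nonneg fun l _ => (hK i).1 l
    have hb : ∀ (l : Fin (m+1)) (i : Fin d), ((e K l i : ℝ)) ^ 2 ≤ ((N:ℝ) / Real.sqrt d) ^ 2 := by
      intro l i
      refine Fin.lastCases ?_ ?_ l
      · have h1 : ((∑ l', K i l' : ℤ) : ℝ) ≤ (N:ℝ) / Real.sqrt d := (hK i).2.2
        have h2 : (0:ℝ) ≤ ((∑ l', K i l' : ℤ) : ℝ) := by exact_mod_cast hsum0 i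
        have : (e K (Fin.last m) i : ℝ) = -((∑ l', K i l' : ℤ) : ℝ) := by
          simp [e, Fin.snoc_last]
        rw [this, neg_sq]
        nlinarith
      · intro l'
        have hv : e K l'.castSucc i = K i l' := by simp [e, Fin.snoc_castSucc]
        rw [hv]
        have h0 : (0:ℤ) ≤ K i l' := (hK i).1 l'
        have h1 : K i l' ≤ ∑ l'', K i l'' :=
          Finset.single_le_sum (fun l'' _ => (hK i).1 l'') (Finset.mem_univ l')
        have h1' : ((K i l' : ℤ) : ℝ) ≤ (N:ℝ) / Real.sqrt d := by
          calc ((K i l' : ℤ) : ℝ) ≤ ((∑ l'', K i l'' : ℤ) : ℝ) := by exact_mod_cast h1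
            _ ≤ _ := (hK i).2.2
        have h0' : (0:ℝ) ≤ ((K i l' : ℤ) : ℝ) := by exact_mod_cast h0
        nlinarith
    have hcond : (∀ l, Real.sqrt (∑ i, ((e K l i : ℝ)) ^ 2) ≤ (N : ℝ)) ∧
        (∑ l, e K l) = 0 := by
      constructor
      · intro l
        have hsq : ((N:ℝ) / Real.sqrt d) ^ 2 = (N:ℝ)^2 / d := by
          rw [div_pow, Real.sq_sqrt (by positivity : (0:ℝ) ≤ (d:ℝ))]
        have hle : ∑ i, ((e K l i : ℝ)) ^ 2 ≤ (N:ℝ)^2 := by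
          calc ∑ i, ((e K l i : ℝ)) ^ 2 ≤ ∑ _i : Fin d, ((N:ℝ)/Real.sqrt d)^2 :=
                Finset.sum_le_sum fun i _ => hb l i
            _ = d * ((N:ℝ)^2 / d) := by
                rw [Finset.sum_const, Finset.card_univ, Fintype.card_fin, nsmul_eq_mul, hsq]
            _ = (N:ℝ)^2 := by
                have hd0 : (d:ℝ) ≠ 0 := by
                  have : (0:ℝ) < d := by exact_mod_cast hd
                  exact ne_of_gt this
                field_simp
        calc Real.sqrt (∑ i, ((e K l i : ℝ)) ^ 2) ≤ Real.sqrt ((N:ℝ)^2) :=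
              Real.sqrt_le_sqrt hle
          _ = (N:ℝ) := Real.sqrt_sq (by positivity)
      · funext i
        have : ∑ l : Fin (m+1), e K l i = 0 := by
          rw [Fin.sum_univ_castSucc]
          simp [e, Fin.snoc_castSucc, Fin.snoc_last]
        simpa [Finset.sum_apply] using this
    have hval : ∏ i, F (K i) = G (e K) := by
      rw [hG]
      simp only [if_pos hcond]
      have : ∀ i, F (K i) =
          ENNReal.ofReal ((∏ l, (atl (K i l)) ^ 2) * (atl (∑ l, K i l)) ^ 2) := by
        intro i; rw [hF]; simp only [if_pos (hK i)]
      simp_rw [this]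
      rw [← ENNReal.ofReal_prod_of_nonneg (fun i _ => by positivity)]
      congr 1
      have : ∀ l : Fin (m+1), (∏ i, atl (e K l i)) ^ 2 = ∏ i, (atl (e K l i)) ^ 2 := by
        intro l; rw [← Finset.prod_pow]
      simp_rw [this]
      rw [Finset.prod_comm]
      refine Finset.prod_congr rfl fun i _ => ?_
      rw [Fin.prod_univ_castSucc]
      congr 1
      · refine Finset.prod_congr rfl fun l _ => ?_
        simp [e, Fin.snoc_castSucc]
      · have : e K (Fin.last m) i = -(∑ l, K i l) := by simp [e, Fin.snoc_last]
        rw [this, heven]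
    exact le_of_eq hval
  · push_neg at hK
    obtain ⟨i, hi⟩ := hK
    have : F (K i) = 0 := by
      simp only [hF]
      exact if_neg fun h => absurd h.2.2 (not_le.2 (hi h.1 h.2.1))
    calc ∏ i', F (K i') = 0 := Finset.prod_eq_zero (Finset.mem_univ i) this
      _ ≤ _ := zero_le
end
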